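/- Let C be a rainbow cycle and X either a rainbow cycle or a bad piece, such that the color sets of X and of C \ X are disjoint and C has at least one edge whose vertex pair is not an edge of X. If C and X share at least two vertices, then the union C ∪ X contains a rainbow even cycle. -/

import Mathlib

set_option linter.unusedSectionVars false


/-! Colored graphs encoded as finite sets of (vertex pair, color) entries. -/

variable {V K : Type*} [DecidableEq V] [DecidableEq K]

/-- Uncolored edges of a colored graph. -/
def uedges (G : Finset (Sym2 V × K)) : Set (Sym2 V) := {e | ∃ c, (e, c) ∈ G}

/-- The underlying simple graph of a colored graph. -/
def graphOf (G : Finset (Sym2 V × K)) : SimpleGraph V :=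
  SimpleGraph.fromEdgeSet (uedges G)

/-- Vertex set of a colored graph. -/
def vertSet (G : Finset (Sym2 V × K)) : Set V := {v | ∃ p ∈ G, v ∈ p.1}

/-- Color set of a colored graph. -/
def colorSet (G : Finset (Sym2 V × K)) : Set K := {c | ∃ e, (e, c) ∈ G}

/-- A colored graph is simple: no loops, and no two edges on the same vertex pair. -/
def Simple (G : Finset (Sym2 V × K)) : Prop :=
  (∀ p ∈ G, ¬ p.1.IsDiag) ∧ ∀ p ∈ G, ∀ q ∈ G, p.1 = q.1 → p = q

/-- A colored graph is rainbow: all edges have pairwise distinct colors. -/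
def Rainbow (G : Finset (Sym2 V × K)) : Prop :=
  ∀ p ∈ G, ∀ q ∈ G, p.2 = q.2 → p = q

/-- The (uncolored) edges of `G` form a cycle. -/
def IsCycleSet (G : Finset (Sym2 V × K)) : Prop :=
  ∃ (u : V) (W : (graphOf G).Walk u u), W.IsCycle ∧ ∀ e, e ∈ uedges G ↔ e ∈ W.edges

/-- The (uncolored) edges of `G` form a path with terminals `s` and `t`. -/
def IsPathSet (G : Finset (Sym2 V × K)) (s t : V) : Prop :=
  ∃ W : (graphOf G).Walk s t, W.IsPath ∧ ∀ e, e ∈ uedges G ↔ e ∈ W.edges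

/-- A bad piece: an almost rainbow theta graph made of three rainbow paths sharing
their two terminals, with at least 6 vertices. -/
def IsBadPiece (G : Finset (Sym2 V × K)) : Prop :=
  Simple G ∧ (colorSet G).ncard = G.card - 1 ∧ 6 ≤ (vertSet G).ncard ∧
  ∃ s t : V, s ≠ t ∧ ∃ P : Fin 3 → Finset (Sym2 V × K),
    G = P 0 ∪ P 1 ∪ P 2 ∧
    (∀ i, IsPathSet (P i) s t ∧ Rainbow (P i)) ∧
    (∀ i j, i ≠ j → vertSet (P i) ∩ vertSet (P j) = {s, t}) ∧
    (∀ i j, i ≠ j → uedges (P i) ∩ uedges (P j) = ∅)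

/-- `G` contains a rainbow even cycle subgraph. -/
def ContainsRainbowEvenCycle (G : Finset (Sym2 V × K)) : Prop :=
  ∃ R ⊆ G, Simple R ∧ Rainbow R ∧ IsCycleSet R ∧ Even R.card

/-- A long rainbow odd cycle: a rainbow cycle of odd length at least 7. -/
def IsLongRainbowOddCycle (G : Finset (Sym2 V × K)) : Prop :=
  Simple G ∧ Rainbow G ∧ IsCycleSet G ∧ Odd G.card ∧ 7 ≤ G.card

/-- A rainbow tree: a rainbow, acyclic, connected colored graph. -/
def IsRainbowTree (G : Finset (Sym2 V × K)) : Prop :=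
  Simple G ∧ Rainbow G ∧ (graphOf G).IsAcyclic ∧
    ∀ u ∈ vertSet G, ∀ v ∈ vertSet G, (graphOf G).Reachable u v

/-- A Frankenstein partition: each part is a long rainbow odd cycle, a bad piece or a
rainbow tree; distinct parts share at most one vertex and have disjoint colors; the
rainbow trees are pairwise vertex-disjoint; and the union contains no rainbow even
cycle subgraph. -/
def IsFrankensteinPartition {m : ℕ} (parts : Fin m → Finset (Sym2 V × K)) : Prop :=
  (∀ i j, i ≠ j → Set.Subsingleton (vertSet (parts i) ∩ vertSet (parts j))) ∧
  (∀ i j, i ≠ j → Disjoint (colorSet (parts i)) (colorSet (parts j))) ∧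
  (∀ i, IsLongRainbowOddCycle (parts i) ∨ IsBadPiece (parts i) ∨ IsRainbowTree (parts i)) ∧
  (∀ i j, i ≠ j → IsRainbowTree (parts i) → IsRainbowTree (parts j) →
    vertSet (parts i) ∩ vertSet (parts j) = ∅) ∧
  ¬ ContainsRainbowEvenCycle (Finset.univ.biUnion parts)

/-- A Frankenstein graph: a colored graph admitting a Frankenstein partition. -/
def IsFrankenstein (G : Finset (Sym2 V × K)) : Prop :=
  ∃ (m : ℕ) (parts : Fin m → Finset (Sym2 V × K)),
    1 ≤ m ∧ G = Finset.univ.biUnion parts ∧ IsFrankensteinPartition parts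


/-! ### Infrastructure -/

section Basic
variable {A B G : Finset (Sym2 V × K)}

lemma uedges_mono (h : A ⊆ B) : uedges A ⊆ uedges B := fun _ ⟨c, hc⟩ => ⟨c, h hc⟩
lemma vertSet_mono (h : A ⊆ B) : vertSet A ⊆ vertSet B := fun _ ⟨p, hp, hv⟩ => ⟨p, h hp, hv⟩
lemma colorSet_mono (h : A ⊆ B) : colorSet A ⊆ colorSet B := fun _ ⟨e, he⟩ => ⟨e, h he⟩

lemma uedges_union : uedges (A ∪ B) = uedges A ∪ uedges B := by
  ext e; constructor
  · rintro ⟨c, hc⟩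
    rcases Finset.mem_union.1 hc with h | h
    · exact Or.inl ⟨c, h⟩
    · exact Or.inr ⟨c, h⟩
  · rintro (⟨c, hc⟩ | ⟨c, hc⟩)
    exacts [⟨c, Finset.mem_union_left _ hc⟩, ⟨c, Finset.mem_union_right _ hc⟩]

lemma vertSet_union : vertSet (A ∪ B) = vertSet A ∪ vertSet B := by
  ext v; constructor
  · rintro ⟨p, hp, hv⟩
    rcases Finset.mem_union.1 hp with h | h
    · exact Or.inl ⟨p, h, hv⟩
    · exact Or.inr ⟨p, h, hv⟩
  · rintro (⟨p, hp, hv⟩ | ⟨p, hp, hv⟩)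
    exacts [⟨p, Finset.mem_union_left _ hp, hv⟩, ⟨p, Finset.mem_union_right _ hp, hv⟩]

lemma Simple.mono (hB : Simple B) (h : A ⊆ B) : Simple A :=
  ⟨fun p hp => hB.1 p (h hp), fun p hp q hq => hB.2 p (h hp) q (h hq)⟩

lemma Rainbow.mono (hB : Rainbow B) (h : A ⊆ B) : Rainbow A :=
  fun p hp q hq => hB p (h hp) q (h hq)

lemma rainbow_union (hA : Rainbow A) (hB : Rainbow B)
    (h : ∀ p ∈ A, ∀ q ∈ B, p.2 = q.2 → p = q) : Rainbow (A ∪ B) := by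
  intro p hp q hq hc
  rcases Finset.mem_union.1 hp with hp' | hp' <;> rcases Finset.mem_union.1 hq with hq' | hq'
  · exact hA p hp' q hq' hc
  · exact h p hp' q hq' hc
  · exact (h q hq' p hp' hc.symm).symm
  · exact hB p hp' q hq' hc

lemma mem_vertSet_of_mem_uedges {e : Sym2 V} {v : V} (he : e ∈ uedges G) (hv : v ∈ e) :
    v ∈ vertSet G := by rcases he with ⟨c, hc⟩; exact ⟨(e, c), hc, hv⟩

lemma finset_disjoint_of_uedges_disjoint (h : uedges A ∩ uedges B = ∅) :
    Disjoint A B := by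
  rw [Finset.disjoint_left]
  intro p hpA hpB
  have : p.1 ∈ uedges A ∩ uedges B := ⟨⟨p.2, hpA⟩, ⟨p.2, hpB⟩⟩
  simp [h] at this

lemma simple_union (hA : Simple A) (hB : Simple B) (h : uedges A ∩ uedges B = ∅) :
    Simple (A ∪ B) := by
  constructor
  · intro p hp
    rcases Finset.mem_union.1 hp with h' | h'
    exacts [hA.1 p h', hB.1 p h']
  · intro p hp q hq he
    rcases Finset.mem_union.1 hp with hp' | hp' <;> rcases Finset.mem_union.1 hq with hq' | hq'
    · exact hA.2 p hp' q hq' he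
    · exfalso
      have h1 : p.1 ∈ uedges A := ⟨p.2, hp'⟩
      have h2 : p.1 ∈ uedges B := ⟨q.2, by rw [he]; exact hq'⟩
      have : p.1 ∈ uedges A ∩ uedges B := ⟨h1, h2⟩
      simp [h] at this
    · exfalso
      have h1 : p.1 ∈ uedges A := ⟨q.2, by rw [he]; exact hq'⟩
      have h2 : p.1 ∈ uedges B := ⟨p.2, hp'⟩
      have : p.1 ∈ uedges A ∩ uedges B := ⟨h1, h2⟩
      simp [h] at this
    · exact hB.2 p hp' q hq' he

lemma edgeSet_graphOf {e : Sym2 V} : e ∈ (graphOf G).edgeSet ↔ e ∈ uedges G ∧ ¬ e.IsDiag := by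
  simp [graphOf, SimpleGraph.edgeSet_fromEdgeSet, Set.mem_diff]

lemma contains_rec_mono (h : A ⊆ B) (hA : ContainsRainbowEvenCycle A) :
    ContainsRainbowEvenCycle B := by
  obtain ⟨R, hR, hrest⟩ := hA; exact ⟨R, hR.trans h, hrest⟩

end Basic

section WalkHelpers
open SimpleGraph

lemma mem_edge_of_mem_support {G' : SimpleGraph V} {u v : V} (w : G'.Walk u v)
    (hw : w.edges ≠ []) {x : V} (hx : x ∈ w.support) : ∃ e ∈ w.edges, x ∈ e := by
  induction w with
  | nil => simp at hw
  | @cons a b c h w ih =>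
    rcases List.mem_cons.1 (by simpa using hx) with rfl | hx'
    · exact ⟨s(x, b), by simp, by simp⟩
    · cases w with
      | nil =>
        have hxb : x = b := by simpa using hx'
        subst hxb
        exact ⟨s(a, x), by simp, by simp⟩
      | cons h' w' =>
        obtain ⟨e, he, hxe⟩ := ih (by simp) hx'
        rw [Walk.edges_cons]
        exact ⟨e, List.mem_cons_of_mem _ he, hxe⟩

lemma mem_support_of_mem_edges {G' : SimpleGraph V} {u v x : V} {e : Sym2 V}
    (w : G'.Walk u v) (he : e ∈ w.edges) (hx : x ∈ e) : x ∈ w.support := by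
  induction e using Sym2.ind with
  | _ a b =>
    rcases Sym2.mem_iff.1 hx with rfl | rfl
    · exact Walk.fst_mem_support_of_mem_edges w he
    · exact Walk.snd_mem_support_of_mem_edges w he

lemma support_subset_vertSet {G : Finset (Sym2 V × K)} {s t : V}
    (W : (graphOf G).Walk s t) (hiff : ∀ e, e ∈ uedges G ↔ e ∈ W.edges)
    (hne : W.edges ≠ []) {x : V} (hx : x ∈ W.support) : x ∈ vertSet G := by
  obtain ⟨e, he, hxe⟩ := mem_edge_of_mem_support W hne hx
  exact mem_vertSet_of_mem_uedges ((hiff e).2 he) hxe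

lemma IsPathSet.reverse {G : Finset (Sym2 V × K)} {s t : V} (h : IsPathSet G s t) :
    IsPathSet G t s := by
  obtain ⟨W, hW, hiff⟩ := h
  exact ⟨W.reverse, hW.reverse, fun e => by
    rw [hiff e, SimpleGraph.Walk.edges_reverse, List.mem_reverse]⟩

lemma IsPathSet.self_empty {G : Finset (Sym2 V × K)} {u : V} (h : IsPathSet G u u) :
    G = ∅ := by
  obtain ⟨W, hW, hiff⟩ := h
  have hWnil : W = Walk.nil := Walk.isPath_iff_eq_nil.1 hW
  ext p
  simp only [Finset.notMem_empty, iff_false]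
  intro hp
  have : p.1 ∈ uedges G := ⟨p.2, hp⟩
  rw [hiff] at this
  rw [hWnil] at this
  simp at this

lemma IsPathSet.endpoints_mem {G : Finset (Sym2 V × K)} {s t : V} (h : IsPathSet G s t)
    (hst : s ≠ t) : s ∈ vertSet G ∧ t ∈ vertSet G := by
  obtain ⟨W, hW, hiff⟩ := h
  have hne : W.edges ≠ [] := by
    intro h0
    exact hst (Walk.eq_of_length_eq_zero (by rw [← Walk.length_edges, h0]; rfl))
  exact ⟨support_subset_vertSet W hiff hne W.start_mem_support,
    support_subset_vertSet W hiff hne W.end_mem_support⟩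

lemma piece_of_walk {G : Finset (Sym2 V × K)} {x y : V}
    (q : (graphOf G).Walk x y) (hq : q.IsPath) :
    IsPathSet (G.filter (fun p => p.1 ∈ q.edges)) x y ∧
    uedges (G.filter (fun p => p.1 ∈ q.edges)) = {e | e ∈ q.edges} ∧
    G.filter (fun p => p.1 ∈ q.edges) ⊆ G := by
  set S := G.filter (fun p => p.1 ∈ q.edges) with hS
  have hsub : S ⊆ G := Finset.filter_subset _ _
  have hue : uedges S = {e | e ∈ q.edges} := by
    ext e; constructor
    · rintro ⟨c, hc⟩
      exact (Finset.mem_filter.1 hc).2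
    · intro he
      have := edgeSet_graphOf.1 (Walk.edges_subset_edgeSet q he)
      obtain ⟨c, hc⟩ := this.1
      exact ⟨c, Finset.mem_filter.2 ⟨hc, he⟩⟩
  have hedges : ∀ e ∈ q.edges, e ∈ (graphOf S).edgeSet := by
    intro e he
    have := edgeSet_graphOf.1 (Walk.edges_subset_edgeSet q he)
    exact edgeSet_graphOf.2 ⟨by rw [hue]; exact he, this.2⟩
  refine ⟨⟨q.transfer (graphOf S) hedges, hq.transfer hedges, ?_⟩, hue, hsub⟩
  intro e
  rw [Walk.edges_transfer, hue]; rfl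

end WalkHelpers


section ConcatSplitGlue
open SimpleGraph

/-- Concatenating two internally disjoint path sets gives a path set. -/
lemma concat_pathSets {A B : Finset (Sym2 V × K)} {u w v : V}
    (hA : IsPathSet A u w) (hB : IsPathSet B w v)
    (hue : uedges A ∩ uedges B = ∅)
    (hvs : vertSet A ∩ vertSet B ⊆ {w}) :
    IsPathSet (A ∪ B) u v := by
  obtain ⟨a, ha, hiffA⟩ := hA
  obtain ⟨b, hb, hiffB⟩ := hB
  have hea : ∀ e ∈ a.edges, e ∈ (graphOf (A ∪ B)).edgeSet := by
    intro e he
    have h1 := edgeSet_graphOf.1 (a.edges_subset_edgeSet he)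
    refine edgeSet_graphOf.2 ⟨?_, h1.2⟩
    rw [uedges_union]; exact Or.inl ((hiffA e).2 he)
  have heb : ∀ e ∈ b.edges, e ∈ (graphOf (A ∪ B)).edgeSet := by
    intro e he
    have h1 := edgeSet_graphOf.1 (b.edges_subset_edgeSet he)
    refine edgeSet_graphOf.2 ⟨?_, h1.2⟩
    rw [uedges_union]; exact Or.inr ((hiffB e).2 he)
  set c := (a.transfer _ hea).append (b.transfer _ heb) with hc
  have hce : c.edges = a.edges ++ b.edges := by
    rw [hc, Walk.edges_append, Walk.edges_transfer, Walk.edges_transfer]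
  have hcs : c.support = a.support ++ b.support.tail := by
    rw [hc, Walk.support_append, Walk.support_transfer, Walk.support_transfer]
  have hbnodup : b.support.Nodup := hb.support_nodup
  have hwtail : w ∉ b.support.tail := by
    have := hbnodup
    rw [Walk.support_eq_cons] at this
    exact (List.nodup_cons.1 this).1
  have hpath : c.IsPath := by
    rw [Walk.isPath_def, hcs, List.nodup_append]
    refine ⟨ha.support_nodup, hbnodup.tail, ?_⟩
    intro x hx1 y hx2 hxy
    rw [← hxy] at hx2
    by_cases hbe : b.edges = []
    · have hn : b.Nil := Walk.nil_iff_length_eq.2 (by rw [← Walk.length_edges, hbe]; rfl)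
      rw [Walk.nil_iff_support_eq] at hn
      rw [hn] at hx2
      simp at hx2
    · have hxw : x = w := by
        by_cases hae : a.edges = []
        · have huw : u = w := Walk.eq_of_length_eq_zero (by rw [← Walk.length_edges, hae]; rfl)
          have hn : a.Nil := Walk.nil_iff_length_eq.2 (by rw [← Walk.length_edges, hae]; rfl)
          rw [Walk.nil_iff_support_eq] at hn
          rw [hn] at hx1
          simp at hx1
          rw [hx1, huw]
        · have h1 : x ∈ vertSet A := support_subset_vertSet a hiffA hae hx1
          have h2 : x ∈ vertSet B :=
            support_subset_vertSet b hiffB hbe (List.mem_of_mem_tail hx2)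
          have := hvs ⟨h1, h2⟩
          simpa using this
      rw [hxw] at hx2
      exact hwtail hx2
  refine ⟨c, hpath, ?_⟩
  intro e
  rw [uedges_union]
  constructor
  · rintro (h | h)
    · rw [hce]
      exact List.mem_append.2 (Or.inl ((hiffA e).1 h))
    · rw [hce]
      exact List.mem_append.2 (Or.inr ((hiffB e).1 h))
  · intro h
    rw [hce] at h
    rcases List.mem_append.1 h with h | h
    · exact Or.inl ((hiffA e).2 h)
    · exact Or.inr ((hiffB e).2 h)

/-- Splitting a path set at a vertex on it. -/
lemma split_pathSet {G : Finset (Sym2 V × K)} {s t : V}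
    (h : IsPathSet G s t) {w : V} (hw : w ∈ vertSet G) :
    ∃ A B : Finset (Sym2 V × K), G = A ∪ B ∧ A ⊆ G ∧ B ⊆ G ∧
      IsPathSet A s w ∧ IsPathSet B w t ∧
      uedges A ∩ uedges B = ∅ ∧ vertSet A ∩ vertSet B ⊆ {w} ∧ Disjoint A B := by
  obtain ⟨W, hW, hiff⟩ := h
  have hws : w ∈ W.support := by
    obtain ⟨p, hp, hv⟩ := hw
    have : p.1 ∈ uedges G := ⟨p.2, hp⟩
    exact mem_support_of_mem_edges W ((hiff _).1 this) hv
  set q := W.takeUntil w hws with hq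
  set r := W.dropUntil w hws with hr
  have hspec : q.append r = W := W.take_spec hws
  obtain ⟨hAps, hAue, hAsub⟩ := piece_of_walk q (hW.takeUntil hws)
  obtain ⟨hBps, hBue, hBsub⟩ := piece_of_walk r (hW.dropUntil hws)
  set A := G.filter (fun p => p.1 ∈ q.edges) with hA
  set B := G.filter (fun p => p.1 ∈ r.edges) with hB
  have hWe : ∀ e, e ∈ W.edges ↔ e ∈ q.edges ∨ e ∈ r.edges := by
    intro e
    rw [← hspec, Walk.edges_append, List.mem_append]
  have hGAB : G = A ∪ B := by
    ext p
    constructor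
    · intro hp
      have : p.1 ∈ W.edges := (hiff _).1 ⟨p.2, hp⟩
      rcases (hWe _).1 this with h' | h'
      · exact Finset.mem_union_left _ (Finset.mem_filter.2 ⟨hp, h'⟩)
      · exact Finset.mem_union_right _ (Finset.mem_filter.2 ⟨hp, h'⟩)
    · intro hp
      rcases Finset.mem_union.1 hp with h' | h'
      exacts [hAsub h', hBsub h']
  have hnodupW : W.edges.Nodup := hW.isTrail.edges_nodup
  have hedis : uedges A ∩ uedges B = ∅ := by
    rw [hAue, hBue]
    ext e
    simp only [Set.mem_inter_iff, Set.mem_setOf_eq, Set.mem_empty_iff_false, iff_false, not_and]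
    intro h1 h2
    have : (q.edges ++ r.edges).Nodup := by
      rw [← Walk.edges_append, hspec]; exact hnodupW
    exact ((List.nodup_append.1 this).2.2 e h1 e h2 rfl).elim
  have hWsup : W.support = q.support ++ r.support.tail := by
    rw [← hspec, Walk.support_append]
  have hWsn : W.support.Nodup := hW.support_nodup
  have hvdis : vertSet A ∩ vertSet B ⊆ {w} := by
    rintro x ⟨hx1, hx2⟩
    obtain ⟨p1, hp1, hv1⟩ := hx1
    obtain ⟨p2, hp2, hv2⟩ := hx2
    have he1 : p1.1 ∈ q.edges := by
      have : p1.1 ∈ uedges A := ⟨p1.2, hp1⟩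
      rwa [hAue] at this
    have he2 : p2.1 ∈ r.edges := by
      have : p2.1 ∈ uedges B := ⟨p2.2, hp2⟩
      rwa [hBue] at this
    have hs1 : x ∈ q.support := mem_support_of_mem_edges q he1 hv1
    have hs2 : x ∈ r.support := mem_support_of_mem_edges r he2 hv2
    rw [Walk.support_eq_cons r] at hs2
    rcases List.mem_cons.1 hs2 with h' | h'
    · simp [h']
    · exfalso
      rw [hWsup] at hWsn
      exact (List.nodup_append.1 hWsn).2.2 x hs1 x h' rfl
  exact ⟨A, B, hGAB, hAsub, hBsub, hAps, hBps, hedis, hvdis,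
    finset_disjoint_of_uedges_disjoint hedis⟩

/-- Gluing two internally disjoint path sets with the same endpoints into a cycle set. -/
lemma glue_cycle {P Q : Finset (Sym2 V × K)} {u v : V} (huv : u ≠ v)
    (hP : IsPathSet P u v) (hQ : IsPathSet Q u v)
    (hue : uedges P ∩ uedges Q = ∅)
    (hvs : vertSet P ∩ vertSet Q ⊆ {u, v}) :
    IsCycleSet (P ∪ Q) ∧ (P ∪ Q).card = P.card + Q.card := by
  obtain ⟨p, hp, hiffP⟩ := hP
  obtain ⟨q0, hq0, hiffQ⟩ := hQ.reverse
  -- q0 : walk from v to u in graphOf Q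
  have hep : ∀ e ∈ p.edges, e ∈ (graphOf (P ∪ Q)).edgeSet := by
    intro e he
    have h1 := edgeSet_graphOf.1 (p.edges_subset_edgeSet he)
    refine edgeSet_graphOf.2 ⟨?_, h1.2⟩
    rw [uedges_union]; exact Or.inl ((hiffP e).2 he)
  have heq : ∀ e ∈ q0.edges, e ∈ (graphOf (P ∪ Q)).edgeSet := by
    intro e he
    have h1 := edgeSet_graphOf.1 (q0.edges_subset_edgeSet he)
    refine edgeSet_graphOf.2 ⟨?_, h1.2⟩
    rw [uedges_union]; exact Or.inr ((hiffQ e).2 he)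
  set c := (p.transfer _ hep).append (q0.transfer _ heq) with hc
  have hce : c.edges = p.edges ++ q0.edges := by
    rw [hc, Walk.edges_append, Walk.edges_transfer, Walk.edges_transfer]
  have hcs : c.support = p.support ++ q0.support.tail := by
    rw [hc, Walk.support_append, Walk.support_transfer, Walk.support_transfer]
  have hpne : p.edges ≠ [] := by
    intro h0
    exact huv (Walk.eq_of_length_eq_zero (by rw [← Walk.length_edges, h0]; rfl))
  have hqne : q0.edges ≠ [] := by
    intro h0
    exact huv (Walk.eq_of_length_eq_zero (by rw [← Walk.length_edges, h0]; rfl)).symm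
  have hcycle : c.IsCycle := by
    rw [Walk.isCycle_def]
    refine ⟨⟨?_⟩, ?_, ?_⟩
    · -- trail: edges nodup
      rw [hce, List.nodup_append]
      refine ⟨hp.isTrail.edges_nodup, hq0.isTrail.edges_nodup, ?_⟩
      intro e he1 e' he2 hee
      rw [← hee] at he2
      have : e ∈ uedges P ∩ uedges Q := ⟨(hiffP e).2 he1, (hiffQ e).2 he2⟩
      simp [hue] at this
    · -- nonempty
      intro h0
      have : c.edges = [] := by rw [h0]; rfl
      rw [hce] at this
      exact hpne (List.append_eq_nil_iff.1 this).1
    · -- support tail nodup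
      have hcst : c.support.tail = p.support.tail ++ q0.support.tail := by
        rw [hcs, Walk.support_eq_cons p]
        rfl
      rw [hcst, List.nodup_append]
      have hq0n : q0.support.Nodup := hq0.support_nodup
      refine ⟨hp.support_nodup.tail, hq0n.tail, ?_⟩
      intro x hx1 y hx2 hxy
      rw [← hxy] at hx2
      have h1 : x ∈ vertSet P :=
        support_subset_vertSet p hiffP hpne (List.mem_of_mem_tail hx1)
      have h2 : x ∈ vertSet Q :=
        support_subset_vertSet q0 hiffQ hqne (List.mem_of_mem_tail hx2)
      have hx := hvs ⟨h1, h2⟩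
      rcases hx with rfl | hx
      · -- x = u : but u is the head of p.support
        have := hp.support_nodup
        rw [Walk.support_eq_cons p] at this
        exact (List.nodup_cons.1 this).1 hx1
      · -- x = v : but v is the head of q0.support
        simp only [Set.mem_singleton_iff] at hx
        subst hx
        have := hq0.support_nodup
        rw [Walk.support_eq_cons q0] at this
        exact (List.nodup_cons.1 this).1 hx2
  refine ⟨⟨u, c, hcycle, ?_⟩, ?_⟩
  · intro e
    rw [uedges_union, hce]
    constructor
    · rintro (h | h)
      · exact List.mem_append.2 (Or.inl ((hiffP e).1 h))
      · exact List.mem_append.2 (Or.inr ((hiffQ e).1 h))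
    · intro h
      rcases List.mem_append.1 h with h | h
      · exact Or.inl ((hiffP e).2 h)
      · exact Or.inr ((hiffQ e).2 h)
  · exact Finset.card_union_of_disjoint (finset_disjoint_of_uedges_disjoint hue)

end ConcatSplitGlue


section CycleArcs
open SimpleGraph

lemma glue_rec {U Q1 Q2 : Finset (Sym2 V × K)} {u v : V}
    (h1 : Q1 ⊆ U) (h2 : Q2 ⊆ U) (huv : u ≠ v)
    (hp1 : IsPathSet Q1 u v) (hp2 : IsPathSet Q2 u v)
    (hs1 : Simple Q1) (hs2 : Simple Q2)
    (hue : uedges Q1 ∩ uedges Q2 = ∅)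
    (hvs : vertSet Q1 ∩ vertSet Q2 ⊆ {u, v})
    (hrb : Rainbow (Q1 ∪ Q2)) (hev : Even (Q1.card + Q2.card)) :
    ContainsRainbowEvenCycle U := by
  obtain ⟨hcyc, hcard⟩ := glue_cycle huv hp1 hp2 hue hvs
  exact ⟨Q1 ∪ Q2, Finset.union_subset h1 h2, simple_union hs1 hs2 hue, hrb, hcyc,
    by rw [hcard]; exact hev⟩

/-- An even cycle set that is simple and rainbow is itself a rainbow even cycle. -/
lemma diag_of_all_eq {e : Sym2 V} {u : V} (h : ∀ x ∈ e, x = u) : e.IsDiag := by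
  induction e using Sym2.ind with
  | _ a b =>
    rw [h a (by simp), h b (by simp)]
    exact Sym2.mk_isDiag_iff.2 rfl

/-- Splitting a cycle set at two of its vertices into two internally disjoint arcs. -/
lemma cycle_two_arcs {X : Finset (Sym2 V × K)} (hX : IsCycleSet X)
    {u v : V} (hu : u ∈ vertSet X) (hv : v ∈ vertSet X) (huv : u ≠ v) :
    ∃ Q1 Q2 : Finset (Sym2 V × K), Q1 ⊆ X ∧ Q2 ⊆ X ∧
      IsPathSet Q1 u v ∧ IsPathSet Q2 u v ∧
      uedges Q1 ∩ uedges Q2 = ∅ ∧ vertSet Q1 ∩ vertSet Q2 ⊆ {u, v} ∧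
      Q1.card + Q2.card = X.card := by
  obtain ⟨w0, W, hWc, hWiff⟩ := hX
  have husup : u ∈ W.support := by
    obtain ⟨p, hp, hvp⟩ := hu
    exact mem_support_of_mem_edges W ((hWiff _).1 ⟨p.2, hp⟩) hvp
  set W' := W.rotate u husup with hW'
  have hW'c : W'.IsCycle := hWc.rotate husup
  have hW'iff : ∀ e, e ∈ uedges X ↔ e ∈ W'.edges := by
    intro e
    rw [hWiff e]
    exact ((W.rotate_edges u husup).perm.mem_iff).symm
  have hvsup : v ∈ W'.support := by
    obtain ⟨p, hp, hvp⟩ := hv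
    exact mem_support_of_mem_edges W' ((hW'iff _).1 ⟨p.2, hp⟩) hvp
  set q := W'.takeUntil v hvsup with hq
  set r := W'.dropUntil v hvsup with hr
  have hspec : q.append r = W' := W'.take_spec hvsup
  have hWsup : W'.support = q.support ++ r.support.tail := by
    rw [← hspec, Walk.support_append]
  have hWtail : W'.support.tail = q.support.tail ++ r.support.tail := by
    have h1 : W'.support = u :: W'.support.tail := Walk.support_eq_cons W'
    have h2 : q.support = u :: q.support.tail := Walk.support_eq_cons q
    rw [hWsup, h2] at h1 ⊢
    simpa using congrArg List.tail h1
  have htn : (q.support.tail ++ r.support.tail).Nodup := by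
    rw [← hWtail]; exact hW'c.2
  have hqtn := (List.nodup_append.1 htn).1
  have hrtn := (List.nodup_append.1 htn).2.1
  have hdisj := List.disjoint_of_nodup_append htn
  have hqnn : q.edges ≠ [] := by
    intro h0
    exact huv (Walk.eq_of_length_eq_zero (by rw [← Walk.length_edges, h0]; rfl))
  have hrnn : r.edges ≠ [] := by
    intro h0
    exact huv (Walk.eq_of_length_eq_zero (by rw [← Walk.length_edges, h0]; rfl)).symm
  have hvq : v ∈ q.support.tail := by
    have : v ∈ q.support := Walk.end_mem_support q
    rw [Walk.support_eq_cons q] at this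
    rcases List.mem_cons.1 this with h' | h'
    · exact absurd h'.symm huv
    · exact h'
  have hur : u ∈ r.support.tail := by
    have : u ∈ r.support := Walk.end_mem_support r
    rw [Walk.support_eq_cons r] at this
    rcases List.mem_cons.1 this with h' | h'
    · exact absurd h' huv
    · exact h'
  have hqpath : q.IsPath := by
    rw [Walk.isPath_def, Walk.support_eq_cons q, List.nodup_cons]
    refine ⟨fun hc => ?_, hqtn⟩
    exact (hdisj hc) hur
  have hrpath : r.IsPath := by
    rw [Walk.isPath_def, Walk.support_eq_cons r, List.nodup_cons]
    refine ⟨fun hc => (hdisj hvq) hc, hrtn⟩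
  obtain ⟨hQ1ps, hQ1ue, hQ1sub⟩ := piece_of_walk q hqpath
  obtain ⟨hQ2ps, hQ2ue, hQ2sub⟩ := piece_of_walk r hrpath
  set Q1 := X.filter (fun p => p.1 ∈ q.edges) with hQ1
  set Q2 := X.filter (fun p => p.1 ∈ r.edges) with hQ2
  have hWe : ∀ e, e ∈ W'.edges ↔ e ∈ q.edges ∨ e ∈ r.edges := by
    intro e
    rw [← hspec, Walk.edges_append, List.mem_append]
  have hXQ : X = Q1 ∪ Q2 := by
    ext p
    constructor
    · intro hp
      rcases (hWe _).1 ((hW'iff _).1 ⟨p.2, hp⟩) with h' | h'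
      · exact Finset.mem_union_left _ (Finset.mem_filter.2 ⟨hp, h'⟩)
      · exact Finset.mem_union_right _ (Finset.mem_filter.2 ⟨hp, h'⟩)
    · intro hp
      rcases Finset.mem_union.1 hp with h' | h'
      exacts [hQ1sub h', hQ2sub h']
  have hednodup : (q.edges ++ r.edges).Nodup := by
    rw [← Walk.edges_append, hspec]
    exact hW'c.isTrail.edges_nodup
  have hedis : uedges Q1 ∩ uedges Q2 = ∅ := by
    rw [hQ1ue, hQ2ue]
    ext e
    simp only [Set.mem_inter_iff, Set.mem_setOf_eq, Set.mem_empty_iff_false, iff_false, not_and]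
    exact fun h1 h2 => ((List.nodup_append.1 hednodup).2.2 e h1 e h2 rfl).elim
  have hvdis : vertSet Q1 ∩ vertSet Q2 ⊆ {u, v} := by
    rintro x ⟨hx1, hx2⟩
    obtain ⟨p1, hp1, hv1⟩ := hx1
    obtain ⟨p2, hp2, hv2⟩ := hx2
    have he1 : p1.1 ∈ q.edges := by
      have : p1.1 ∈ uedges Q1 := ⟨p1.2, hp1⟩
      rwa [hQ1ue] at this
    have he2 : p2.1 ∈ r.edges := by
      have : p2.1 ∈ uedges Q2 := ⟨p2.2, hp2⟩
      rwa [hQ2ue] at this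
    have hs1 : x ∈ q.support := mem_support_of_mem_edges q he1 hv1
    have hs2 : x ∈ r.support := mem_support_of_mem_edges r he2 hv2
    rw [Walk.support_eq_cons q] at hs1
    rw [Walk.support_eq_cons r] at hs2
    rcases List.mem_cons.1 hs1 with rfl | hs1'
    · exact Or.inl rfl
    rcases List.mem_cons.1 hs2 with rfl | hs2'
    · exact Or.inr rfl
    exact absurd hs2' (hdisj hs1')
  refine ⟨Q1, Q2, hQ1sub, hQ2sub, hQ1ps, ?_, hedis, hvdis, ?_⟩
  · exact hQ2ps.reverse
  · rw [hXQ]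
    exact (Finset.card_union_of_disjoint (finset_disjoint_of_uedges_disjoint hedis)).symm

end CycleArcs


section ArcAvoiding
open SimpleGraph

lemma end_mem_support_tail {G' : SimpleGraph V} {a b : V} (p : G'.Walk a b)
    (h : p.support.tail ≠ []) : b ∈ p.support.tail := by
  cases p with
  | nil => simp at h
  | cons adj p' => simpa using SimpleGraph.Walk.end_mem_support p'

lemma walk_split_first {G' : SimpleGraph V} {x y : V} (W : G'.Walk x y) (S : Set V)
    (h : ∃ z ∈ W.support, z ∈ S) :
    ∃ u, u ∈ S ∧ ∃ (q : G'.Walk x u) (r : G'.Walk u y), W = q.append r ∧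
      ∀ z ∈ q.support, z ∈ S → z = u := by
  induction W with
  | nil =>
    refine ⟨_, by simpa using h, Walk.nil, Walk.nil, rfl, ?_⟩
    intro z hz _
    simpa using hz
  | @cons a b c adj W ih =>
    by_cases hx : a ∈ S
    · exact ⟨a, hx, Walk.nil, Walk.cons adj W, rfl, fun z hz _ => by simpa using hz⟩
    · obtain ⟨z, hz, hzS⟩ := h
      have hz' : z ∈ W.support := by
        rcases List.mem_cons.1 (by simpa using hz) with rfl | h'
        · exact absurd hzS hx
        · exact h'
      obtain ⟨u, hu, q, r, hspec, hfirst⟩ := ih ⟨z, hz', hzS⟩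
      refine ⟨u, hu, Walk.cons adj q, r, by rw [Walk.cons_append, hspec], ?_⟩
      intro z' hz' hz'S
      rcases List.mem_cons.1 (by simpa using hz') with rfl | h'
      · exact absurd hz'S hx
      · exact hfirst z' h' hz'S

/-- The key arc extraction: a path in `C` between two vertices of `X`, internally
avoiding `X`, with all edges avoiding the edges of `X`. -/
lemma arc_avoiding {C X : Finset (Sym2 V × K)} (hCs : Simple C) (hCc : IsCycleSet C)
    (hedge : ∃ p ∈ C, p.1 ∉ uedges X)
    (hmeet : ∃ v₁ v₂ : V, v₁ ≠ v₂ ∧ v₁ ∈ vertSet C ∩ vertSet X ∧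
      v₂ ∈ vertSet C ∩ vertSet X) :
    ∃ u v : V, ∃ P : Finset (Sym2 V × K), u ≠ v ∧ u ∈ vertSet X ∧ v ∈ vertSet X ∧
      P ⊆ C ∧ IsPathSet P u v ∧ uedges P ∩ uedges X = ∅ ∧
      vertSet P ∩ vertSet X ⊆ {u, v} := by
  by_cases hall : ∀ x ∈ vertSet C, x ∈ vertSet X
  · -- use the given edge itself
    obtain ⟨pe, hpe, hpex⟩ := hedge
    obtain ⟨e, k⟩ := pe
    revert hpe hpex
    induction e using Sym2.ind with
    | _ a b =>
      intro hpe hpex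
      simp only at hpe hpex ⊢
      have hab : a ≠ b := by
        intro h
        exact hCs.1 _ hpe (by simp [h])
      have haC : a ∈ vertSet C := ⟨(s(a, b), k), hpe, by simp⟩
      have hbC : b ∈ vertSet C := ⟨(s(a, b), k), hpe, by simp⟩
      set P : Finset (Sym2 V × K) := {(s(a, b), k)} with hP
      have huP : uedges P = {s(a, b)} := by
        ext e
        constructor
        · rintro ⟨c, hc⟩
          simp only [hP, Finset.mem_singleton, Prod.mk.injEq] at hc
          simp [hc.1]
        · rintro rfl
          exact ⟨k, by simp [hP]⟩
      have hadj : (graphOf P).Adj a b := by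
        rw [graphOf, SimpleGraph.fromEdgeSet_adj]
        exact ⟨by rw [huP]; rfl, hab⟩
      refine ⟨a, b, P, hab, hall a haC, hall b hbC, by simp [hP, hpe], ?_, ?_, ?_⟩
      · refine ⟨Walk.cons hadj Walk.nil, ?_, ?_⟩
        · rw [Walk.cons_isPath_iff]
          exact ⟨Walk.IsPath.nil, by simpa using hab⟩
        · intro e
          rw [huP]
          simp
      · rw [huP]
        ext e
        simp only [Set.mem_inter_iff, Set.mem_singleton_iff, Set.mem_empty_iff_false, iff_false,
          not_and]
        rintro rfl
        exact hpex
      · rintro x ⟨⟨p', hp', hv⟩, _⟩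
        simp only [hP, Finset.mem_singleton] at hp'
        subst hp'
        simp only at hv
        rcases Sym2.mem_iff.1 hv with rfl | rfl
        · exact Or.inl rfl
        · exact Or.inr rfl
  · push_neg at hall
    obtain ⟨w, hwC, hwX⟩ := hall
    set S : Set V := vertSet X with hSdef
    obtain ⟨z1, z2, hz12, ⟨hz1C, hz1X⟩, ⟨hz2C, hz2X⟩⟩ := hmeet
    obtain ⟨w0, W, hWc, hWiff⟩ := hCc
    have hmemsup : ∀ x ∈ vertSet C, x ∈ W.support := by
      rintro x ⟨p, hp, hv⟩
      exact mem_support_of_mem_edges W ((hWiff _).1 ⟨p.2, hp⟩) hv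
    set W' := W.rotate w (hmemsup w hwC) with hW'
    have hW'c : W'.IsCycle := hWc.rotate _
    have hW'iff : ∀ e, e ∈ uedges C ↔ e ∈ W'.edges := by
      intro e
      rw [hWiff e]
      exact ((W.rotate_edges _ _).perm.mem_iff).symm
    have hmemsup' : ∀ x ∈ vertSet C, x ∈ W'.support := by
      rintro x ⟨p, hp, hv⟩
      exact mem_support_of_mem_edges W' ((hW'iff _).1 ⟨p.2, hp⟩) hv
    -- first split
    obtain ⟨u, huS, q1, r1, hspec1, hfirst1⟩ :=
      walk_split_first W' S ⟨z1, hmemsup' z1 hz1C, hz1X⟩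
    have huw : u ≠ w := fun h => hwX (h ▸ huS)
    -- second split, from the rear
    have hur1 : u ∈ r1.reverse.support := by
      rw [Walk.support_reverse, List.mem_reverse]
      exact Walk.start_mem_support r1
    obtain ⟨v, hvS, q2, r2, hspec2, hfirst2⟩ :=
      walk_split_first r1.reverse S ⟨u, hur1, huS⟩
    have hvw : v ≠ w := fun h => hwX (h ▸ hvS)
    -- structural nodup facts
    have hWsup : W'.support = q1.support ++ r1.support.tail := by
      rw [hspec1, Walk.support_append]
    have hWtail : W'.support.tail = q1.support.tail ++ r1.support.tail := by
      have h2 : q1.support = w :: q1.support.tail := Walk.support_eq_cons q1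
      rw [hWsup, h2]
      rfl
    have htn : (q1.support.tail ++ r1.support.tail).Nodup := by
      rw [← hWtail]; exact hW'c.2
    have hq1tn := (List.nodup_append.1 htn).1
    have hr1tn := (List.nodup_append.1 htn).2.1
    have hdisj := List.disjoint_of_nodup_append htn
    have huq1 : u ∈ q1.support.tail := by
      have : u ∈ q1.support := Walk.end_mem_support q1
      rw [Walk.support_eq_cons q1] at this
      rcases List.mem_cons.1 this with h' | h'
      · exact (huw h').elim
      · exact h'
    have hwr1 : w ∈ r1.support.tail := by
      have : w ∈ r1.support := Walk.end_mem_support r1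
      rw [Walk.support_eq_cons r1] at this
      rcases List.mem_cons.1 this with h' | h'
      · exact absurd h' (fun hh => huw hh.symm)
      · exact h'
    have hq1nodup : q1.support.Nodup := by
      rw [Walk.support_eq_cons q1, List.nodup_cons]
      exact ⟨fun hc => (hdisj hc) hwr1, hq1tn⟩
    have hr1nodup : r1.support.Nodup := by
      rw [Walk.support_eq_cons r1, List.nodup_cons]
      exact ⟨fun hc => (hdisj huq1) hc, hr1tn⟩
    have hrevnodup : r1.reverse.support.Nodup := by
      rw [Walk.support_reverse]
      exact List.nodup_reverse.2 hr1nodup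
    have hrevsup : r1.reverse.support = q2.support ++ r2.support.tail := by
      rw [hspec2, Walk.support_append]
    have hq2nodup : q2.support.Nodup := by
      rw [hrevsup] at hrevnodup
      exact (List.nodup_append.1 hrevnodup).1
    -- u ≠ v
    have huv : u ≠ v := by
      intro h
      subst h
      -- all hits equal u, contradicting z1 ≠ z2
      have hr2nil : r2.support.tail = [] := by
        by_contra hne
        have hlast : u ∈ r2.support.tail := end_mem_support_tail r2 hne
        have huq2 : u ∈ q2.support := Walk.end_mem_support q2
        rw [hrevsup] at hrevnodup
        exact (List.nodup_append.1 hrevnodup).2.2 u huq2 u hlast rfl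
      have hallhits : ∀ z ∈ W'.support, z ∈ S → z = u := by
        intro z hz hzS
        rw [hWsup] at hz
        rcases List.mem_append.1 hz with h' | h'
        · exact hfirst1 z h' hzS
        · have : z ∈ r1.support := List.mem_of_mem_tail h'
          have : z ∈ r1.reverse.support := by
            rw [Walk.support_reverse, List.mem_reverse]; exact this
          rw [hrevsup] at this
          rcases List.mem_append.1 this with h'' | h''
          · exact hfirst2 z h'' hzS
          · rw [hr2nil] at h''
            simp at h''
      have e1 := hallhits z1 (hmemsup' z1 hz1C) hz1X
      have e2 := hallhits z2 (hmemsup' z2 hz2C) hz2X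
      exact hz12 (e1.trans e2.symm)
    -- the path walk through w
    set pw := q1.reverse.append q2 with hpw
    have hpwsup : pw.support = q1.support.reverse ++ q2.support.tail := by
      rw [hpw, Walk.support_append, Walk.support_reverse]
    have hpwpath : pw.IsPath := by
      rw [Walk.isPath_def, hpwsup, List.nodup_append]
      refine ⟨List.nodup_reverse.2 hq1nodup, hq2nodup.tail, ?_⟩
      intro x hx1 y hx2 hxy
      rw [← hxy] at hx2
      rw [List.mem_reverse] at hx1
      have hx2' : x ∈ q2.support := List.mem_of_mem_tail hx2
      -- x in q1.support and q2.support.tail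
      rw [Walk.support_eq_cons q1] at hx1
      rcases List.mem_cons.1 hx1 with rfl | hx1'
      · -- x = w, head of q2.support
        have := hq2nodup
        rw [Walk.support_eq_cons q2] at this
        exact (List.nodup_cons.1 this).1 hx2
      · -- x ∈ q1.support.tail and x ∈ q2.support ⊆ r1.reverse.support
        have hxr : x ∈ r1.support := by
          have : x ∈ r1.reverse.support := by
            rw [hrevsup]
            exact List.mem_append.2 (Or.inl hx2')
          rwa [Walk.support_reverse, List.mem_reverse] at this
        rw [Walk.support_eq_cons r1] at hxr
        rcases List.mem_cons.1 hxr with rfl | hxr'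
        · -- x = u ∈ q2.support means u is an S-hit of q2, so u = v
          exact huv (hfirst2 x hx2' huS)
        · exact (hdisj hx1') hxr'
    obtain ⟨hPps, hPue, hPsub⟩ := piece_of_walk pw hpwpath
    set P := C.filter (fun p => p.1 ∈ pw.edges) with hPdef
    have hpwe : ∀ e ∈ pw.edges, e ∈ q1.edges ∨ e ∈ q2.edges := by
      intro e he
      rw [hpw, Walk.edges_append, List.mem_append, Walk.edges_reverse, List.mem_reverse] at he
      exact he
    have hedgeavoid : ∀ e ∈ pw.edges, e ∉ uedges X := by
      intro e he heX
      have hnd : ¬ e.IsDiag := by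
        have := edgeSet_graphOf.1 (pw.edges_subset_edgeSet he)
        exact this.2
      rcases hpwe e he with h' | h'
      · refine hnd (diag_of_all_eq (u := u) ?_)
        intro x hx
        have hxs : x ∈ q1.support := mem_support_of_mem_edges q1 h' hx
        exact hfirst1 x hxs (mem_vertSet_of_mem_uedges heX hx)
      · refine hnd (diag_of_all_eq (u := v) ?_)
        intro x hx
        have hxs : x ∈ q2.support := mem_support_of_mem_edges q2 h' hx
        exact hfirst2 x hxs (mem_vertSet_of_mem_uedges heX hx)
    refine ⟨u, v, P, huv, huS, hvS, hPsub, hPps, ?_, ?_⟩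
    · rw [hPue]
      ext e
      simp only [Set.mem_inter_iff, Set.mem_setOf_eq, Set.mem_empty_iff_false, iff_false, not_and]
      exact fun h1 h2 => hedgeavoid e h1 h2
    · rintro x ⟨⟨p', hp', hv'⟩, hxX⟩
      have he' : p'.1 ∈ pw.edges := by
        have : p'.1 ∈ uedges P := ⟨p'.2, hp'⟩
        rwa [hPue] at this
      rcases hpwe _ he' with h' | h'
      · have hxs : x ∈ q1.support := mem_support_of_mem_edges q1 h' hv'
        exact Or.inl (hfirst1 x hxs hxX)
      · have hxs : x ∈ q2.support := mem_support_of_mem_edges q2 h' hv'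
        exact Or.inr (hfirst2 x hxs hxX)

end ArcAvoiding


section Clash

/-- An almost-rainbow graph has exactly one pair of equal-colored edges. -/
lemma clash_structure {X : Finset (Sym2 V × K)}
    (hcount : (colorSet X).ncard = X.card - 1) (hne : X.Nonempty) :
    ∃ e1 ∈ X, ∃ e2 ∈ X, e1 ≠ e2 ∧ e1.2 = e2.2 ∧
      ∀ p ∈ X, ∀ q ∈ X, p.2 = q.2 → p = q ∨ (p = e1 ∧ q = e2) ∨ (p = e2 ∧ q = e1) := by
  have himg : colorSet X = ↑(X.image Prod.snd) := by
    ext c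
    simp only [colorSet, Set.mem_setOf_eq, Finset.coe_image, Set.mem_image, Finset.mem_coe]
    constructor
    · rintro ⟨e, he⟩
      exact ⟨(e, c), he, rfl⟩
    · rintro ⟨p, hp, rfl⟩
      exact ⟨p.1, hp⟩
  have hcard : (X.image Prod.snd).card = X.card - 1 := by
    rw [himg, Set.ncard_coe_finset] at hcount
    exact hcount
  have hpos : 1 ≤ X.card := Finset.card_pos.2 hne
  have hninj : ¬ Set.InjOn Prod.snd (X : Set (Sym2 V × K)) := by
    intro hinj
    have := Finset.card_image_of_injOn hinj
    omega
  rw [Set.InjOn] at hninj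
  push_neg at hninj
  obtain ⟨e1, he1, e2, he2, hc, hne12⟩ := hninj
  rw [Finset.mem_coe] at he1 he2
  have herase : (X.erase e2).image Prod.snd = X.image Prod.snd := by
    apply Finset.Subset.antisymm
    · exact Finset.image_subset_image (Finset.erase_subset _ _)
    · intro c hcmem
      obtain ⟨p, hp, rfl⟩ := Finset.mem_image.1 hcmem
      by_cases hpe : p = e2
      · exact Finset.mem_image.2 ⟨e1, Finset.mem_erase.2 ⟨hne12, he1⟩, by rw [hpe] at *; exact hc⟩
      · exact Finset.mem_image.2 ⟨p, Finset.mem_erase.2 ⟨hpe, hp⟩, rfl⟩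
  have hcarderase : (X.erase e2).card = X.card - 1 := Finset.card_erase_of_mem he2
  have hinj : Set.InjOn Prod.snd ((X.erase e2 : Finset (Sym2 V × K)) : Set (Sym2 V × K)) := by
    rw [← Finset.card_image_iff]
    rw [herase, hcard, hcarderase]
  refine ⟨e1, he1, e2, he2, hne12, hc, ?_⟩
  intro p hp q hq hpq
  by_cases hp2 : p = e2
  · by_cases hq2 : q = e2
    · exact Or.inl (hp2.trans hq2.symm)
    · right; right
      refine ⟨hp2, ?_⟩
      apply hinj (Finset.mem_coe.2 (Finset.mem_erase.2 ⟨hq2, hq⟩))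
        (Finset.mem_coe.2 (Finset.mem_erase.2 ⟨hne12, he1⟩))
      rw [← hpq, hp2, hc]
  · by_cases hq2 : q = e2
    · right; left
      refine ⟨?_, hq2⟩
      apply hinj (Finset.mem_coe.2 (Finset.mem_erase.2 ⟨hp2, hp⟩))
        (Finset.mem_coe.2 (Finset.mem_erase.2 ⟨hne12, he1⟩))
      rw [hpq, hq2, hc]
    · exact Or.inl (hinj (Finset.mem_coe.2 (Finset.mem_erase.2 ⟨hp2, hp⟩))
        (Finset.mem_coe.2 (Finset.mem_erase.2 ⟨hq2, hq⟩)) hpq)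

/-- A subgraph missing one of the two clash edges is rainbow. -/
lemma near_rainbow_subset {X S : Finset (Sym2 V × K)} {e1 e2 : Sym2 V × K}
    (hclash : ∀ p ∈ X, ∀ q ∈ X, p.2 = q.2 → p = q ∨ (p = e1 ∧ q = e2) ∨ (p = e2 ∧ q = e1))
    (hS : S ⊆ X) (hmiss : e1 ∉ S ∨ e2 ∉ S) : Rainbow S := by
  intro p hp q hq hc
  rcases hclash p (hS hp) q (hS hq) hc with h | ⟨h1, h2⟩ | ⟨h1, h2⟩
  · exact h
  · rcases hmiss with hm | hm
    · exact absurd (h1 ▸ hp) hm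
    · exact absurd (h2 ▸ hq) hm
  · rcases hmiss with hm | hm
    · exact absurd (h2 ▸ hq) hm
    · exact absurd (h1 ▸ hp) hm

end Clash


section BadPieceCases
open SimpleGraph

variable {A B A' W1 M E2 Y : Finset (Sym2 V × K)}

lemma ue_comm (h : uedges A ∩ uedges B = ∅) : uedges B ∩ uedges A = ∅ := by
  rwa [Set.inter_comm]

lemma ue_union_left {C : Finset (Sym2 V × K)} (h1 : uedges A ∩ uedges C = ∅)
    (h2 : uedges B ∩ uedges C = ∅) : uedges (A ∪ B) ∩ uedges C = ∅ := by
  rw [uedges_union, Set.union_inter_distrib_right, h1, h2, Set.union_empty]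

lemma ue_sub_left (h : A' ⊆ A) (he : uedges A ∩ uedges B = ∅) :
    uedges A' ∩ uedges B = ∅ :=
  Set.subset_empty_iff.1 (he ▸ Set.inter_subset_inter_left _ (uedges_mono h))

lemma ue_sub_right (h : A' ⊆ A) (he : uedges B ∩ uedges A = ∅) :
    uedges B ∩ uedges A' = ∅ :=
  Set.subset_empty_iff.1 (he ▸ Set.inter_subset_inter_right _ (uedges_mono h))

lemma vertSet_empty : vertSet (∅ : Finset (Sym2 V × K)) = ∅ := by
  ext x; simp [vertSet]

/-- Ordered same-path case: the cycle decomposes as `s –W1– u –M– v –E2– t`,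
with `Y` the auxiliary path from `s` to `t`. -/
lemma cso {s t u v : V} (huv : u ≠ v)
    (hW1 : IsPathSet W1 s u) (hM : IsPathSet M u v) (hE2 : IsPathSet E2 v t)
    (hY : IsPathSet Y s t)
    (sW1 : Simple W1) (sM : Simple M) (sE2 : Simple E2) (sY : Simple Y)
    (vW1M : vertSet W1 ∩ vertSet M ⊆ {u})
    (vME2 : vertSet M ∩ vertSet E2 ⊆ {v})
    (vW1E2 : vertSet W1 ∩ vertSet E2 ⊆ (∅ : Set V))
    (vW1Y : vertSet W1 ∩ vertSet Y ⊆ {s})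
    (vMY : vertSet M ∩ vertSet Y ⊆ {u, v})
    (vE2Y : vertSet E2 ∩ vertSet Y ⊆ {t})
    (ueW1M : uedges W1 ∩ uedges M = ∅) (ueME2 : uedges M ∩ uedges E2 = ∅)
    (ueW1E2 : uedges W1 ∩ uedges E2 = ∅) (ueW1Y : uedges W1 ∩ uedges Y = ∅)
    (ueMY : uedges M ∩ uedges Y = ∅) (ueE2Y : uedges E2 ∩ uedges Y = ∅)
    (hrb : Rainbow (W1 ∪ M ∪ E2 ∪ Y)) :
    ContainsRainbowEvenCycle (W1 ∪ M ∪ E2 ∪ Y) ∨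
      ∃ Q1 Q2 : Finset (Sym2 V × K), Q1 ⊆ W1 ∪ M ∪ E2 ∪ Y ∧ Q2 ⊆ W1 ∪ M ∪ E2 ∪ Y ∧
        IsPathSet Q1 u v ∧ IsPathSet Q2 u v ∧ Rainbow Q1 ∧ Rainbow Q2 ∧
        Odd (Q1.card + Q2.card) := by
  have hQ2a : IsPathSet (W1 ∪ Y) u t := concat_pathSets hW1.reverse hY ueW1Y vW1Y
  have ue' : uedges (W1 ∪ Y) ∩ uedges E2 = ∅ :=
    ue_union_left ueW1E2 (ue_comm ueE2Y)
  have v' : vertSet (W1 ∪ Y) ∩ vertSet E2 ⊆ {t} := by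
    rintro x ⟨hx, hxE⟩
    rw [vertSet_union] at hx
    rcases hx with hx | hx
    · exact absurd (vW1E2 ⟨hx, hxE⟩) (Set.notMem_empty x)
    · exact vE2Y ⟨hxE, hx⟩
  have hQ2 : IsPathSet ((W1 ∪ Y) ∪ E2) u v :=
    concat_pathSets hQ2a hE2.reverse ue' v'
  have sQ2 : Simple ((W1 ∪ Y) ∪ E2) :=
    simple_union (simple_union sW1 sY ueW1Y) sE2 ue'
  have ueQ : uedges M ∩ uedges ((W1 ∪ Y) ∪ E2) = ∅ :=
    ue_comm (ue_union_left (ue_union_left ueW1M (ue_comm ueMY)) (ue_comm ueME2))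
  have vQ : vertSet M ∩ vertSet ((W1 ∪ Y) ∪ E2) ⊆ {u, v} := by
    rintro x ⟨hxM, hxQ⟩
    rw [vertSet_union, vertSet_union] at hxQ
    rcases hxQ with (hx | hx) | hx
    · exact Or.inl (vW1M ⟨hx, hxM⟩)
    · exact vMY ⟨hxM, hx⟩
    · exact Or.inr (vME2 ⟨hxM, hx⟩)
  have hsub1 : M ⊆ W1 ∪ M ∪ E2 ∪ Y := by
    intro p hp; simp only [Finset.mem_union]; tauto
  have hsub2 : (W1 ∪ Y) ∪ E2 ⊆ W1 ∪ M ∪ E2 ∪ Y := by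
    intro p hp; simp only [Finset.mem_union] at hp ⊢; tauto
  rcases Nat.even_or_odd (M.card + ((W1 ∪ Y) ∪ E2).card) with he | ho
  · exact Or.inl (glue_rec hsub1 hsub2 huv hM hQ2 sM sQ2 ueQ vQ
      (hrb.mono (Finset.union_subset hsub1 hsub2)) he)
  · exact Or.inr ⟨M, (W1 ∪ Y) ∪ E2, hsub1, hsub2, hM, hQ2,
      hrb.mono hsub1, hrb.mono hsub2, ho⟩

end BadPieceCases


section CaseSame
open SimpleGraph

lemma case_same {W Y : Finset (Sym2 V × K)} {s t u v : V}
    (huv : u ≠ v)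
    (hW : IsPathSet W s t) (hY : IsPathSet Y s t)
    (sW : Simple W) (sY : Simple Y)
    (hWY : vertSet W ∩ vertSet Y ⊆ {s, t})
    (ueWY : uedges W ∩ uedges Y = ∅)
    (hrb : Rainbow (W ∪ Y))
    (hu : u ∈ vertSet W) (hv : v ∈ vertSet W) :
    ContainsRainbowEvenCycle (W ∪ Y) ∨
      ∃ Q1 Q2 : Finset (Sym2 V × K), Q1 ⊆ W ∪ Y ∧ Q2 ⊆ W ∪ Y ∧
        IsPathSet Q1 u v ∧ IsPathSet Q2 u v ∧ Rainbow Q1 ∧ Rainbow Q2 ∧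
        Odd (Q1.card + Q2.card) := by
  obtain ⟨W1, W2, hWeq, hW1sub, hW2sub, hW1ps, hW2ps, ue12, hv12, hdisj12⟩ :=
    split_pathSet hW hu
  have hvW : v ∈ vertSet W1 ∪ vertSet W2 := by
    rw [← vertSet_union, ← hWeq]; exact hv
  rcases hvW with hv1 | hv2
  · -- branch β : v lies on the first part, order s, v, u, t
    have hsu : s ≠ u := by
      intro h
      rw [← h] at hW1ps
      rw [hW1ps.self_empty, vertSet_empty] at hv1
      exact hv1
    obtain ⟨F1, M, hW1eq, hF1sub1, hMsub1, hF1ps, hMps0, ueF1M, hvF1M, _⟩ :=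
      split_pathSet hW1ps hv1
    have hM' : IsPathSet M u v := hMps0.reverse
    obtain ⟨huM, hvM⟩ := hM'.endpoints_mem huv
    have vW2M : vertSet W2 ∩ vertSet M ⊆ {u} := by
      rintro x ⟨h1, h2⟩
      exact hv12 ⟨vertSet_mono hMsub1 h2, h1⟩
    have vMF1 : vertSet M ∩ vertSet F1 ⊆ {v} := by
      rintro x ⟨h1, h2⟩
      exact hvF1M ⟨h2, h1⟩
    have vW2F1 : vertSet W2 ∩ vertSet F1 ⊆ (∅ : Set V) := by
      rintro x ⟨h1, h2⟩
      have hxu : x = u := hv12 ⟨vertSet_mono hF1sub1 h2, h1⟩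
      subst hxu
      have : x = v := hvF1M ⟨h2, huM⟩
      exact absurd this huv
    have htW2 : t = u ∨ t ∈ vertSet W2 := by
      by_cases hut : u = t
      · exact Or.inl hut.symm
      · exact Or.inr (hW2ps.endpoints_mem hut).2
    have hsF1 : s = v ∨ s ∈ vertSet F1 := by
      by_cases hsv : s = v
      · exact Or.inl hsv
      · exact Or.inr (hF1ps.endpoints_mem hsv).1
    have vW2Y : vertSet W2 ∩ vertSet Y ⊆ {t} := by
      rintro x ⟨h1, h2⟩
      rcases hWY ⟨vertSet_mono hW2sub h1, h2⟩ with rfl | rfl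
      · rcases hsF1 with rfl | hsF
        · exact absurd (hv12 ⟨vertSet_mono hMsub1 hvM, h1⟩) (Ne.symm huv)
        · exact absurd (vW2F1 ⟨h1, hsF⟩) (Set.notMem_empty x)
      · rfl
    have vMY : vertSet M ∩ vertSet Y ⊆ {u, v} := by
      rintro x ⟨h1, h2⟩
      rcases hWY ⟨vertSet_mono (hMsub1.trans hW1sub) h1, h2⟩ with rfl | rfl
      · rcases hsF1 with rfl | hsF
        · exact Or.inr rfl
        · exact Or.inr (hvF1M ⟨hsF, h1⟩)
      · rcases htW2 with rfl | htW
        · exact Or.inl rfl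
        · exact Or.inl (hv12 ⟨vertSet_mono hMsub1 h1, htW⟩)
    have vF1Y : vertSet F1 ∩ vertSet Y ⊆ {s} := by
      rintro x ⟨h1, h2⟩
      rcases hWY ⟨vertSet_mono (hF1sub1.trans hW1sub) h1, h2⟩ with rfl | rfl
      · rfl
      · rcases htW2 with rfl | htW
        · exact absurd (hvF1M ⟨h1, huM⟩) huv
        · exact absurd (vW2F1 ⟨htW, h1⟩) (Set.notMem_empty x)
    have hUsub : W2 ∪ M ∪ F1 ∪ Y ⊆ W ∪ Y := by
      intro p hp
      rcases Finset.mem_union.1 hp with hp' | hp'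
      · rcases Finset.mem_union.1 hp' with hp'' | hp''
        · rcases Finset.mem_union.1 hp'' with h3 | h3
          · exact Finset.mem_union_left _ (hW2sub h3)
          · exact Finset.mem_union_left _ (hW1sub (hMsub1 h3))
        · exact Finset.mem_union_left _ (hW1sub (hF1sub1 hp''))
      · exact Finset.mem_union_right _ hp'
    rcases cso huv hW2ps.reverse hM' hF1ps.reverse hY.reverse
        (sW.mono hW2sub) (sW.mono (hMsub1.trans hW1sub)) (sW.mono (hF1sub1.trans hW1sub)) sY
        vW2M vMF1 vW2F1 vW2Y vMY vF1Y
        (ue_sub_right hMsub1 (ue_comm ue12)) (ue_comm ueF1M)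
        (ue_sub_right hF1sub1 (ue_comm ue12))
        (ue_sub_left hW2sub ueWY) (ue_sub_left (hMsub1.trans hW1sub) ueWY)
        (ue_sub_left (hF1sub1.trans hW1sub) ueWY)
        (hrb.mono hUsub) with hrec | ⟨Q1, Q2, h1, h2, hrest⟩
    · exact Or.inl (contains_rec_mono hUsub hrec)
    · exact Or.inr ⟨Q1, Q2, h1.trans hUsub, h2.trans hUsub, hrest⟩
  · -- branch α : v lies on the second part, order s, u, v, t
    obtain ⟨M, E2, hW2eq, hMsub2, hE2sub2, hMps, hE2ps, ueME2, hvME2, _⟩ :=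
      split_pathSet hW2ps hv2
    obtain ⟨huM, hvM⟩ := hMps.endpoints_mem huv
    have vW1M : vertSet W1 ∩ vertSet M ⊆ {u} := by
      rintro x ⟨h1, h2⟩
      exact hv12 ⟨h1, vertSet_mono hMsub2 h2⟩
    have vW1E2 : vertSet W1 ∩ vertSet E2 ⊆ (∅ : Set V) := by
      rintro x ⟨h1, h2⟩
      have hxu : x = u := hv12 ⟨h1, vertSet_mono hE2sub2 h2⟩
      subst hxu
      have : x = v := hvME2 ⟨huM, h2⟩
      exact absurd this huv
    have hsW1 : s = u ∨ s ∈ vertSet W1 := by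
      by_cases hsu : s = u
      · exact Or.inl hsu
      · exact Or.inr (hW1ps.endpoints_mem hsu).1
    have htE2 : t = v ∨ t ∈ vertSet E2 := by
      by_cases hvt : v = t
      · exact Or.inl hvt.symm
      · exact Or.inr (hE2ps.endpoints_mem hvt).2
    have vW1Y : vertSet W1 ∩ vertSet Y ⊆ {s} := by
      rintro x ⟨h1, h2⟩
      rcases hWY ⟨vertSet_mono hW1sub h1, h2⟩ with rfl | rfl
      · rfl
      · rcases htE2 with rfl | htE
        · exact absurd (hv12 ⟨h1, vertSet_mono hMsub2 hvM⟩) (fun hh => huv hh.symm)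
        · exact absurd (vW1E2 ⟨h1, htE⟩) (Set.notMem_empty x)
    have vMY : vertSet M ∩ vertSet Y ⊆ {u, v} := by
      rintro x ⟨h1, h2⟩
      rcases hWY ⟨vertSet_mono (hMsub2.trans hW2sub) h1, h2⟩ with rfl | rfl
      · rcases hsW1 with rfl | hsW
        · exact Or.inl rfl
        · exact Or.inl (hv12 ⟨hsW, vertSet_mono hMsub2 h1⟩)
      · rcases htE2 with rfl | htE
        · exact Or.inr rfl
        · exact Or.inr (hvME2 ⟨h1, htE⟩)
    have vE2Y : vertSet E2 ∩ vertSet Y ⊆ {t} := by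
      rintro x ⟨h1, h2⟩
      rcases hWY ⟨vertSet_mono (hE2sub2.trans hW2sub) h1, h2⟩ with rfl | rfl
      · rcases hsW1 with rfl | hsW
        · exact absurd (hvME2 ⟨huM, h1⟩) huv
        · exact absurd (vW1E2 ⟨hsW, h1⟩) (Set.notMem_empty x)
      · rfl
    have hUsub : W1 ∪ M ∪ E2 ∪ Y ⊆ W ∪ Y := by
      intro p hp
      rcases Finset.mem_union.1 hp with hp' | hp'
      · rcases Finset.mem_union.1 hp' with hp'' | hp''
        · rcases Finset.mem_union.1 hp'' with h3 | h3
          · exact Finset.mem_union_left _ (hW1sub h3)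
          · exact Finset.mem_union_left _ (hW2sub (hMsub2 h3))
        · exact Finset.mem_union_left _ (hW2sub (hE2sub2 hp''))
      · exact Finset.mem_union_right _ hp'
    rcases cso huv hW1ps hMps hE2ps hY
        (sW.mono hW1sub) (sW.mono (hMsub2.trans hW2sub)) (sW.mono (hE2sub2.trans hW2sub)) sY
        vW1M hvME2 vW1E2 vW1Y vMY vE2Y
        (ue_sub_right hMsub2 ue12) ueME2 (ue_sub_right hE2sub2 ue12)
        (ue_sub_left hW1sub ueWY) (ue_sub_left (hMsub2.trans hW2sub) ueWY)
        (ue_sub_left (hE2sub2.trans hW2sub) ueWY)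
        (hrb.mono hUsub) with hrec | ⟨Q1, Q2, h1, h2, hrest⟩
    · exact Or.inl (contains_rec_mono hUsub hrec)
    · exact Or.inr ⟨Q1, Q2, h1.trans hUsub, h2.trans hUsub, hrest⟩

end CaseSame


section CaseDiff
open SimpleGraph

lemma case_diff_rainbow {A B : Finset (Sym2 V × K)} {s t u v : V}
    (hAps : IsPathSet A s t) (hBps : IsPathSet B s t)
    (sA : Simple A) (sB : Simple B)
    (hAB : vertSet A ∩ vertSet B ⊆ {s, t}) (ueAB : uedges A ∩ uedges B = ∅)
    (hrb : Rainbow (A ∪ B))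
    (hu : u ∈ vertSet A) (hv : v ∈ vertSet B)
    (hus : u ≠ s) (hut : u ≠ t) (hvs : v ≠ s) (hvt : v ≠ t) :
    ContainsRainbowEvenCycle (A ∪ B) ∨
      ∃ Q1 Q2 : Finset (Sym2 V × K), Q1 ⊆ A ∪ B ∧ Q2 ⊆ A ∪ B ∧
        IsPathSet Q1 u v ∧ IsPathSet Q2 u v ∧ Rainbow Q1 ∧ Rainbow Q2 ∧
        Odd (Q1.card + Q2.card) := by
  have huv : u ≠ v := by
    intro h
    subst h
    rcases hAB ⟨hu, hv⟩ with rfl | rfl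
    · exact hus rfl
    · exact hut rfl
  obtain ⟨A1, A2, hAeq, hA1sub, hA2sub, hA1ps, hA2ps, ueA12, hvA12, hdA12⟩ :=
    split_pathSet hAps hu
  obtain ⟨B1, B2, hBeq, hB1sub, hB2sub, hB1ps, hB2ps, ueB12, hvB12, hdB12⟩ :=
    split_pathSet hBps hv
  obtain ⟨hsA1, huA1⟩ := hA1ps.endpoints_mem (fun h => hus h.symm)
  obtain ⟨huA2, htA2⟩ := hA2ps.endpoints_mem hut
  obtain ⟨hsB1, hvB1⟩ := hB1ps.endpoints_mem (fun h => hvs h.symm)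
  obtain ⟨hvB2, htB2⟩ := hB2ps.endpoints_mem hvt
  have vA1B1 : vertSet A1 ∩ vertSet B1 ⊆ {s} := by
    rintro x ⟨h1, h2⟩
    rcases hAB ⟨vertSet_mono hA1sub h1, vertSet_mono hB1sub h2⟩ with rfl | rfl
    · rfl
    · exact absurd (hvA12 ⟨h1, htA2⟩) hut.symm
  have vA2B2 : vertSet A2 ∩ vertSet B2 ⊆ {t} := by
    rintro x ⟨h1, h2⟩
    rcases hAB ⟨vertSet_mono hA2sub h1, vertSet_mono hB2sub h2⟩ with rfl | rfl
    · exact absurd (hvA12 ⟨hsA1, h1⟩) hus.symm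
    · rfl
  have vA1B2 : vertSet A1 ∩ vertSet B2 ⊆ (∅ : Set V) := by
    rintro x ⟨h1, h2⟩
    rcases hAB ⟨vertSet_mono hA1sub h1, vertSet_mono hB2sub h2⟩ with rfl | rfl
    · exact absurd (hvB12 ⟨hsB1, h2⟩) hvs.symm
    · exact absurd (hvA12 ⟨h1, htA2⟩) hut.symm
  have vA2B1 : vertSet A2 ∩ vertSet B1 ⊆ (∅ : Set V) := by
    rintro x ⟨h1, h2⟩
    rcases hAB ⟨vertSet_mono hA2sub h1, vertSet_mono hB1sub h2⟩ with rfl | rfl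
    · exact absurd (hvA12 ⟨hsA1, h1⟩) hus.symm
    · exact absurd (hvB12 ⟨h2, htB2⟩) hvt.symm
  have ueA1B1 : uedges A1 ∩ uedges B1 = ∅ :=
    ue_sub_left hA1sub (ue_sub_right hB1sub ueAB)
  have ueA2B2 : uedges A2 ∩ uedges B2 = ∅ :=
    ue_sub_left hA2sub (ue_sub_right hB2sub ueAB)
  have ueA1B2 : uedges A1 ∩ uedges B2 = ∅ :=
    ue_sub_left hA1sub (ue_sub_right hB2sub ueAB)
  have ueA2B1 : uedges A2 ∩ uedges B1 = ∅ :=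
    ue_sub_left hA2sub (ue_sub_right hB1sub ueAB)
  have hQ1 : IsPathSet (A1 ∪ B1) u v :=
    concat_pathSets hA1ps.reverse hB1ps ueA1B1 vA1B1
  have hQ2 : IsPathSet (A2 ∪ B2) u v :=
    concat_pathSets hA2ps hB2ps.reverse ueA2B2 vA2B2
  have ueQ : uedges (A1 ∪ B1) ∩ uedges (A2 ∪ B2) = ∅ :=
    ue_union_left
      (ue_comm (ue_union_left (ue_comm ueA12) (ue_comm ueA1B2)))
      (ue_comm (ue_union_left ueA2B1 (ue_comm ueB12)))
  have vQ : vertSet (A1 ∪ B1) ∩ vertSet (A2 ∪ B2) ⊆ {u, v} := by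
    rintro x ⟨h1, h2⟩
    rw [vertSet_union] at h1 h2
    rcases h1 with h1 | h1 <;> rcases h2 with h2 | h2
    · exact Or.inl (hvA12 ⟨h1, h2⟩)
    · exact absurd (vA1B2 ⟨h1, h2⟩) (Set.notMem_empty x)
    · exact absurd (vA2B1 ⟨h2, h1⟩) (Set.notMem_empty x)
    · exact Or.inr (hvB12 ⟨h1, h2⟩)
  have hsub1 : A1 ∪ B1 ⊆ A ∪ B :=
    Finset.union_subset ((hA1sub.trans Finset.subset_union_left).trans (le_refl _))
      (hB1sub.trans Finset.subset_union_right)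
  have hsub2 : A2 ∪ B2 ⊆ A ∪ B :=
    Finset.union_subset (hA2sub.trans Finset.subset_union_left)
      (hB2sub.trans Finset.subset_union_right)
  have sQ1 : Simple (A1 ∪ B1) := simple_union (sA.mono hA1sub) (sB.mono hB1sub) ueA1B1
  have sQ2 : Simple (A2 ∪ B2) := simple_union (sA.mono hA2sub) (sB.mono hB2sub) ueA2B2
  rcases Nat.even_or_odd ((A1 ∪ B1).card + (A2 ∪ B2).card) with he | ho
  · exact Or.inl (glue_rec hsub1 hsub2 huv hQ1 hQ2 sQ1 sQ2 ueQ vQ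
      (hrb.mono (Finset.union_subset hsub1 hsub2)) he)
  · exact Or.inr ⟨A1 ∪ B1, A2 ∪ B2, hsub1, hsub2, hQ1, hQ2,
      hrb.mono hsub1, hrb.mono hsub2, ho⟩

lemma case_diff_clash {XX A B Z : Finset (Sym2 V × K)} {s t u v : V} {e1 e2 : Sym2 V × K}
    (hsubA : A ⊆ XX) (hsubB : B ⊆ XX) (hsubZ : Z ⊆ XX)
    (hclash : ∀ p ∈ XX, ∀ q ∈ XX, p.2 = q.2 →
      p = q ∨ (p = e1 ∧ q = e2) ∨ (p = e2 ∧ q = e1))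
    (he1A : e1 ∈ A) (he2B : e2 ∈ B)
    (hAps : IsPathSet A s t) (hBps : IsPathSet B s t) (hZps : IsPathSet Z s t)
    (hAB : vertSet A ∩ vertSet B ⊆ {s, t})
    (hAZ : vertSet A ∩ vertSet Z ⊆ {s, t})
    (hBZ : vertSet B ∩ vertSet Z ⊆ {s, t})
    (ueAB : uedges A ∩ uedges B = ∅)
    (ueAZ : uedges A ∩ uedges Z = ∅)
    (ueBZ : uedges B ∩ uedges Z = ∅)
    (hOddAZ : Odd (A.card + Z.card)) (hOddBZ : Odd (B.card + Z.card))
    (hu : u ∈ vertSet A) (hv : v ∈ vertSet B)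
    (hus : u ≠ s) (hut : u ≠ t) (hvs : v ≠ s) (hvt : v ≠ t) :
    ∃ Q1 Q2 : Finset (Sym2 V × K), Q1 ⊆ XX ∧ Q2 ⊆ XX ∧
      IsPathSet Q1 u v ∧ IsPathSet Q2 u v ∧ Rainbow Q1 ∧ Rainbow Q2 ∧
      Odd (Q1.card + Q2.card) := by
  have huv : u ≠ v := by
    intro h
    subst h
    rcases hAB ⟨hu, hv⟩ with rfl | rfl
    · exact hus rfl
    · exact hut rfl
  obtain ⟨A1, A2, hAeq, hA1sub, hA2sub, hA1ps, hA2ps, ueA12, hvA12, hdA12⟩ :=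
    split_pathSet hAps hu
  obtain ⟨B1, B2, hBeq, hB1sub, hB2sub, hB1ps, hB2ps, ueB12, hvB12, hdB12⟩ :=
    split_pathSet hBps hv
  obtain ⟨hsA1, huA1⟩ := hA1ps.endpoints_mem (fun h => hus h.symm)
  obtain ⟨huA2, htA2⟩ := hA2ps.endpoints_mem hut
  obtain ⟨hsB1, hvB1⟩ := hB1ps.endpoints_mem (fun h => hvs h.symm)
  obtain ⟨hvB2, htB2⟩ := hB2ps.endpoints_mem hvt
  have vA1B1 : vertSet A1 ∩ vertSet B1 ⊆ {s} := by
    rintro x ⟨h1, h2⟩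
    rcases hAB ⟨vertSet_mono hA1sub h1, vertSet_mono hB1sub h2⟩ with rfl | rfl
    · rfl
    · exact absurd (hvA12 ⟨h1, htA2⟩) hut.symm
  have vA2B2 : vertSet A2 ∩ vertSet B2 ⊆ {t} := by
    rintro x ⟨h1, h2⟩
    rcases hAB ⟨vertSet_mono hA2sub h1, vertSet_mono hB2sub h2⟩ with rfl | rfl
    · exact absurd (hvA12 ⟨hsA1, h1⟩) hus.symm
    · rfl
  have vA1B2 : vertSet A1 ∩ vertSet B2 ⊆ (∅ : Set V) := by
    rintro x ⟨h1, h2⟩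
    rcases hAB ⟨vertSet_mono hA1sub h1, vertSet_mono hB2sub h2⟩ with rfl | rfl
    · exact absurd (hvB12 ⟨hsB1, h2⟩) hvs.symm
    · exact absurd (hvA12 ⟨h1, htA2⟩) hut.symm
  have vA2B1 : vertSet A2 ∩ vertSet B1 ⊆ (∅ : Set V) := by
    rintro x ⟨h1, h2⟩
    rcases hAB ⟨vertSet_mono hA2sub h1, vertSet_mono hB1sub h2⟩ with rfl | rfl
    · exact absurd (hvA12 ⟨hsA1, h1⟩) hus.symm
    · exact absurd (hvB12 ⟨h2, htB2⟩) hvt.symm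
  have ueA1B1 : uedges A1 ∩ uedges B1 = ∅ :=
    ue_sub_left hA1sub (ue_sub_right hB1sub ueAB)
  have ueA2B2 : uedges A2 ∩ uedges B2 = ∅ :=
    ue_sub_left hA2sub (ue_sub_right hB2sub ueAB)
  have ueA1B2 : uedges A1 ∩ uedges B2 = ∅ :=
    ue_sub_left hA1sub (ue_sub_right hB2sub ueAB)
  have ueA2B1 : uedges A2 ∩ uedges B1 = ∅ :=
    ue_sub_left hA2sub (ue_sub_right hB1sub ueAB)
  have ueA1Z : uedges A1 ∩ uedges Z = ∅ := ue_sub_left hA1sub ueAZ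
  have ueA2Z : uedges A2 ∩ uedges Z = ∅ := ue_sub_left hA2sub ueAZ
  have ueZB1 : uedges Z ∩ uedges B1 = ∅ := ue_sub_right hB1sub (ue_comm ueBZ)
  have ueZB2 : uedges Z ∩ uedges B2 = ∅ := ue_sub_right hB2sub (ue_comm ueBZ)
  -- the four routes
  have hR1 : IsPathSet (A1 ∪ B1) u v :=
    concat_pathSets hA1ps.reverse hB1ps ueA1B1 vA1B1
  have hR2 : IsPathSet (A2 ∪ B2) u v :=
    concat_pathSets hA2ps hB2ps.reverse ueA2B2 vA2B2
  have vA1Z : vertSet A1 ∩ vertSet Z ⊆ {s} := by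
    rintro x ⟨h1, h2⟩
    rcases hAZ ⟨vertSet_mono hA1sub h1, h2⟩ with rfl | rfl
    · rfl
    · exact absurd (hvA12 ⟨h1, htA2⟩) hut.symm
  have vA2Z : vertSet A2 ∩ vertSet Z ⊆ {t} := by
    rintro x ⟨h1, h2⟩
    rcases hAZ ⟨vertSet_mono hA2sub h1, h2⟩ with rfl | rfl
    · exact absurd (hvA12 ⟨hsA1, h1⟩) hus.symm
    · rfl
  have hA1Z : IsPathSet (A1 ∪ Z) u t := concat_pathSets hA1ps.reverse hZps ueA1Z vA1Z
  have hA2Z : IsPathSet (A2 ∪ Z) u s :=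
    concat_pathSets hA2ps hZps.reverse ueA2Z vA2Z
  have ue3 : uedges (A1 ∪ Z) ∩ uedges B2 = ∅ := ue_union_left ueA1B2 ueZB2
  have v3 : vertSet (A1 ∪ Z) ∩ vertSet B2 ⊆ {t} := by
    rintro x ⟨h1, h2⟩
    rw [vertSet_union] at h1
    rcases h1 with h1 | h1
    · exact absurd (vA1B2 ⟨h1, h2⟩) (Set.notMem_empty x)
    · rcases hBZ ⟨vertSet_mono hB2sub h2, h1⟩ with rfl | rfl
      · exact absurd (hvB12 ⟨hsB1, h2⟩) hvs.symm
      · rfl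
  have hR3 : IsPathSet ((A1 ∪ Z) ∪ B2) u v :=
    concat_pathSets hA1Z hB2ps.reverse ue3 v3
  have ue4 : uedges (A2 ∪ Z) ∩ uedges B1 = ∅ := ue_union_left ueA2B1 ueZB1
  have v4 : vertSet (A2 ∪ Z) ∩ vertSet B1 ⊆ {s} := by
    rintro x ⟨h1, h2⟩
    rw [vertSet_union] at h1
    rcases h1 with h1 | h1
    · exact absurd (vA2B1 ⟨h1, h2⟩) (Set.notMem_empty x)
    · rcases hBZ ⟨vertSet_mono hB1sub h2, h1⟩ with rfl | rfl
      · rfl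
      · exact absurd (hvB12 ⟨h2, htB2⟩) hvt.symm
  have hR4 : IsPathSet ((A2 ∪ Z) ∪ B1) u v :=
    concat_pathSets hA2Z hB1ps ue4 v4
  -- cards
  have cA : A.card = A1.card + A2.card := by
    rw [hAeq]
    exact Finset.card_union_of_disjoint (finset_disjoint_of_uedges_disjoint ueA12)
  have cB : B.card = B1.card + B2.card := by
    rw [hBeq]
    exact Finset.card_union_of_disjoint (finset_disjoint_of_uedges_disjoint ueB12)
  have cR1 : (A1 ∪ B1).card = A1.card + B1.card :=
    Finset.card_union_of_disjoint (finset_disjoint_of_uedges_disjoint ueA1B1)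
  have cR2 : (A2 ∪ B2).card = A2.card + B2.card :=
    Finset.card_union_of_disjoint (finset_disjoint_of_uedges_disjoint ueA2B2)
  have cR3 : ((A1 ∪ Z) ∪ B2).card = A1.card + Z.card + B2.card := by
    rw [Finset.card_union_of_disjoint (finset_disjoint_of_uedges_disjoint ue3),
      Finset.card_union_of_disjoint (finset_disjoint_of_uedges_disjoint ueA1Z)]
  have cR4 : ((A2 ∪ Z) ∪ B1).card = A2.card + Z.card + B1.card := by
    rw [Finset.card_union_of_disjoint (finset_disjoint_of_uedges_disjoint ue4),
      Finset.card_union_of_disjoint (finset_disjoint_of_uedges_disjoint ueA2Z)]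
  -- membership facts for clash edges
  have he1B : e1 ∉ B :=
    Finset.disjoint_left.1 (finset_disjoint_of_uedges_disjoint ueAB) he1A
  have he2A : e2 ∉ A :=
    Finset.disjoint_right.1 (finset_disjoint_of_uedges_disjoint ueAB) he2B
  have he1Z : e1 ∉ Z :=
    Finset.disjoint_left.1 (finset_disjoint_of_uedges_disjoint ueAZ) he1A
  have he2Z : e2 ∉ Z :=
    Finset.disjoint_left.1 (finset_disjoint_of_uedges_disjoint ueBZ) he2B
  have he1B1 : e1 ∉ B1 := fun h => he1B (hB1sub h)
  have he1B2 : e1 ∉ B2 := fun h => he1B (hB2sub h)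
  have he2A1 : e2 ∉ A1 := fun h => he2A (hA1sub h)
  have he2A2 : e2 ∉ A2 := fun h => he2A (hA2sub h)
  -- subsets of XX
  have hR1sub : A1 ∪ B1 ⊆ XX :=
    Finset.union_subset (hA1sub.trans hsubA) (hB1sub.trans hsubB)
  have hR2sub : A2 ∪ B2 ⊆ XX :=
    Finset.union_subset (hA2sub.trans hsubA) (hB2sub.trans hsubB)
  have hR3sub : (A1 ∪ Z) ∪ B2 ⊆ XX :=
    Finset.union_subset (Finset.union_subset (hA1sub.trans hsubA) hsubZ)
      (hB2sub.trans hsubB)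
  have hR4sub : (A2 ∪ Z) ∪ B1 ⊆ XX :=
    Finset.union_subset (Finset.union_subset (hA2sub.trans hsubA) hsubZ)
      (hB1sub.trans hsubB)
  have hOAZ := Nat.odd_iff.1 hOddAZ
  have hOBZ := Nat.odd_iff.1 hOddBZ
  have hdA := finset_disjoint_of_uedges_disjoint ueA12
  have he1A12 : e1 ∈ A1 ∨ e1 ∈ A2 := by
    have : e1 ∈ A1 ∪ A2 := by rw [← hAeq]; exact he1A
    exact Finset.mem_union.1 this
  have he2B12 : e2 ∈ B1 ∨ e2 ∈ B2 := by
    have : e2 ∈ B1 ∪ B2 := by rw [← hBeq]; exact he2B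
    exact Finset.mem_union.1 this
  rcases he1A12 with he1' | he1'
  · have he1A2 : e1 ∉ A2 := Finset.disjoint_left.1 hdA he1'
    rcases he2B12 with he2' | he2'
    · -- e1 ∈ A1, e2 ∈ B1 : use R2 and R4
      have hrb2 : Rainbow (A2 ∪ B2) :=
        near_rainbow_subset hclash hR2sub
          (Or.inl (by simp only [Finset.mem_union]; rintro (h | h); exacts [he1A2 h, he1B2 h]))
      have hrb4 : Rainbow ((A2 ∪ Z) ∪ B1) :=
        near_rainbow_subset hclash hR4sub
          (Or.inl (by simp only [Finset.mem_union]; rintro ((h | h) | h); exacts [he1A2 h, he1Z h, he1B1 h]))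
      refine ⟨_, _, hR2sub, hR4sub, hR2, hR4, hrb2, hrb4, ?_⟩
      rw [Nat.odd_iff, cR2, cR4]
      omega
    · -- e1 ∈ A1, e2 ∈ B2 : use R1 and R4
      have hde2B1 : e2 ∉ B1 :=
        Finset.disjoint_right.1 (finset_disjoint_of_uedges_disjoint ueB12) he2'
      have hrb1 : Rainbow (A1 ∪ B1) :=
        near_rainbow_subset hclash hR1sub
          (Or.inr (by simp only [Finset.mem_union]; rintro (h | h); exacts [he2A1 h, hde2B1 h]))
      have hrb4 : Rainbow ((A2 ∪ Z) ∪ B1) :=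
        near_rainbow_subset hclash hR4sub
          (Or.inr (by simp only [Finset.mem_union]; rintro ((h | h) | h); exacts [he2A2 h, he2Z h, hde2B1 h]))
      refine ⟨_, _, hR1sub, hR4sub, hR1, hR4, hrb1, hrb4, ?_⟩
      rw [Nat.odd_iff, cR1, cR4]
      omega
  · -- e1 ∈ A2
    have he1A1 : e1 ∉ A1 := Finset.disjoint_right.1 hdA he1'
    have hrb1 : Rainbow (A1 ∪ B1) :=
      near_rainbow_subset hclash hR1sub
        (Or.inl (by simp only [Finset.mem_union]; rintro (h | h); exacts [he1A1 h, he1B1 h]))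
    have hrb3 : Rainbow ((A1 ∪ Z) ∪ B2) :=
      near_rainbow_subset hclash hR3sub
        (Or.inl (by simp only [Finset.mem_union]; rintro ((h | h) | h); exacts [he1A1 h, he1Z h, he1B2 h]))
    refine ⟨_, _, hR1sub, hR3sub, hR1, hR3, hrb1, hrb3, ?_⟩
    rw [Nat.odd_iff, cR1, cR3]
    omega

end CaseDiff


section BadPieceMain
open SimpleGraph

lemma badpiece_paths {X : Finset (Sym2 V × K)} (hbp : IsBadPiece X) {u v : V}
    (huX : u ∈ vertSet X) (hvX : v ∈ vertSet X) (huv : u ≠ v) :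
    ContainsRainbowEvenCycle X ∨
      ∃ Q1 Q2 : Finset (Sym2 V × K), Q1 ⊆ X ∧ Q2 ⊆ X ∧
        IsPathSet Q1 u v ∧ IsPathSet Q2 u v ∧ Rainbow Q1 ∧ Rainbow Q2 ∧
        Odd (Q1.card + Q2.card) := by
  obtain ⟨hXs, hcount, hv6, s, t, hst, P, hXeq, hPi, hVij, hEij⟩ := hbp
  have h3 : ∀ x : Fin 3, x = 0 ∨ x = 1 ∨ x = 2 := by decide
  have hPsub : ∀ i, P i ⊆ X := by
    intro i p hp
    rw [hXeq]
    rcases h3 i with rfl | rfl | rfl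
    · exact Finset.mem_union_left _ (Finset.mem_union_left _ hp)
    · exact Finset.mem_union_left _ (Finset.mem_union_right _ hp)
    · exact Finset.mem_union_right _ hp
  have hXne : X.Nonempty := by
    obtain ⟨p, hp, -⟩ := ((hPi 0).1.endpoints_mem hst).1
    exact ⟨p, hPsub 0 hp⟩
  obtain ⟨e1, he1X, e2, he2X, hne12, hcol, hclash⟩ := clash_structure hcount hXne
  have hloc : ∀ p ∈ X, ∃ i, p ∈ P i := by
    intro p hp
    rw [hXeq] at hp
    rcases Finset.mem_union.1 hp with hp' | hp'
    · rcases Finset.mem_union.1 hp' with hp'' | hp''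
      exacts [⟨0, hp''⟩, ⟨1, hp''⟩]
    · exact ⟨2, hp'⟩
  obtain ⟨a, he1a⟩ := hloc e1 he1X
  obtain ⟨b, he2b⟩ := hloc e2 he2X
  have hab : a ≠ b := by
    intro h
    exact hne12 ((hPi a).2 e1 he1a e2 (by rw [h]; exact he2b) hcol)
  have key : ∀ a b : Fin 3, a ≠ b → ∃ c, c ≠ a ∧ c ≠ b ∧
      ∀ x : Fin 3, x = a ∨ x = b ∨ x = c := by decide
  obtain ⟨c, hca, hcb, henum⟩ := key a b hab
  have hA := (hPi a).1
  have hB := (hPi b).1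
  have hZ := (hPi c).1
  have sA : Simple (P a) := hXs.mono (hPsub a)
  have sB : Simple (P b) := hXs.mono (hPsub b)
  have sZ : Simple (P c) := hXs.mono (hPsub c)
  have hvAB : vertSet (P a) ∩ vertSet (P b) ⊆ {s, t} := (hVij a b hab).subset
  have hvAZ : vertSet (P a) ∩ vertSet (P c) ⊆ {s, t} := (hVij a c (Ne.symm hca)).subset
  have hvBZ : vertSet (P b) ∩ vertSet (P c) ⊆ {s, t} := (hVij b c (Ne.symm hcb)).subset
  have ueAB := hEij a b hab
  have ueAZ := hEij a c (Ne.symm hca)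
  have ueBZ := hEij b c (Ne.symm hcb)
  have he2A : e2 ∉ P a :=
    Finset.disjoint_right.1 (finset_disjoint_of_uedges_disjoint ueAB) he2b
  have he1B : e1 ∉ P b :=
    Finset.disjoint_left.1 (finset_disjoint_of_uedges_disjoint ueAB) he1a
  have he2Z : e2 ∉ P c :=
    Finset.disjoint_left.1 (finset_disjoint_of_uedges_disjoint ueBZ) he2b
  have he1Z : e1 ∉ P c :=
    Finset.disjoint_left.1 (finset_disjoint_of_uedges_disjoint ueAZ) he1a
  have hsubAZ : P a ∪ P c ⊆ X := Finset.union_subset (hPsub a) (hPsub c)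
  have hsubBZ : P b ∪ P c ⊆ X := Finset.union_subset (hPsub b) (hPsub c)
  have hsubZA : P c ∪ P a ⊆ X := Finset.union_subset (hPsub c) (hPsub a)
  have hsubZB : P c ∪ P b ⊆ X := Finset.union_subset (hPsub c) (hPsub b)
  have hrbAZ : Rainbow (P a ∪ P c) :=
    near_rainbow_subset hclash hsubAZ
      (Or.inr (by simp only [Finset.mem_union]; rintro (h | h); exacts [he2A h, he2Z h]))
  have hrbBZ : Rainbow (P b ∪ P c) :=
    near_rainbow_subset hclash hsubBZ
      (Or.inl (by simp only [Finset.mem_union]; rintro (h | h); exacts [he1B h, he1Z h]))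
  have hrbZA : Rainbow (P c ∪ P a) :=
    near_rainbow_subset hclash hsubZA
      (Or.inr (by simp only [Finset.mem_union]; rintro (h | h); exacts [he2Z h, he2A h]))
  have hrbZB : Rainbow (P c ∪ P b) :=
    near_rainbow_subset hclash hsubZB
      (Or.inl (by simp only [Finset.mem_union]; rintro (h | h); exacts [he1Z h, he1B h]))
  -- the two theta cycles through the clean path have odd length, or we are done
  rcases Nat.even_or_odd ((P a).card + (P c).card) with hev | hOddAZ
  · exact Or.inl (glue_rec (hPsub a) (hPsub c) hst hA hZ sA sZ ueAZ hvAZ hrbAZ hev)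
  rcases Nat.even_or_odd ((P b).card + (P c).card) with hev | hOddBZ
  · exact Or.inl (glue_rec (hPsub b) (hPsub c) hst hB hZ sB sZ ueBZ hvBZ hrbBZ hev)
  have hvert : ∀ x, x ∈ vertSet X →
      x ∈ vertSet (P a) ∨ x ∈ vertSet (P b) ∨ x ∈ vertSet (P c) := by
    rintro x ⟨p, hp, hv⟩
    obtain ⟨i, hpi⟩ := hloc p hp
    rcases henum i with rfl | rfl | rfl
    · exact Or.inl ⟨p, hpi, hv⟩
    · exact Or.inr (Or.inl ⟨p, hpi, hv⟩)
    · exact Or.inr (Or.inr ⟨p, hpi, hv⟩)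
  by_cases hcase : (u ∈ vertSet (P a) ∧ v ∈ vertSet (P a)) ∨
      (u ∈ vertSet (P b) ∧ v ∈ vertSet (P b)) ∨
      (u ∈ vertSet (P c) ∧ v ∈ vertSet (P c))
  · rcases hcase with ⟨hu', hv'⟩ | ⟨hu', hv'⟩ | ⟨hu', hv'⟩
    · rcases case_same huv hA hZ sA sZ hvAZ ueAZ hrbAZ hu' hv' with hrec | ⟨Q1, Q2, h1, h2, hr⟩
      · exact Or.inl (contains_rec_mono hsubAZ hrec)
      · exact Or.inr ⟨Q1, Q2, h1.trans hsubAZ, h2.trans hsubAZ, hr⟩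
    · rcases case_same huv hB hZ sB sZ hvBZ ueBZ hrbBZ hu' hv' with hrec | ⟨Q1, Q2, h1, h2, hr⟩
      · exact Or.inl (contains_rec_mono hsubBZ hrec)
      · exact Or.inr ⟨Q1, Q2, h1.trans hsubBZ, h2.trans hsubBZ, hr⟩
    · have hvZA : vertSet (P c) ∩ vertSet (P a) ⊆ {s, t} := by
        rintro x ⟨x1, x2⟩; exact hvAZ ⟨x2, x1⟩
      rcases case_same huv hZ hA sZ sA hvZA (ue_comm ueAZ) hrbZA hu' hv' with
        hrec | ⟨Q1, Q2, h1, h2, hr⟩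
      · exact Or.inl (contains_rec_mono hsubZA hrec)
      · exact Or.inr ⟨Q1, Q2, h1.trans hsubZA, h2.trans hsubZA, hr⟩
  · push_neg at hcase
    obtain ⟨hnA, hnB, hnZ⟩ := hcase
    have hsall : ∀ i, s ∈ vertSet (P i) := fun i => ((hPi i).1.endpoints_mem hst).1
    have htall : ∀ i, t ∈ vertSet (P i) := fun i => ((hPi i).1.endpoints_mem hst).2
    have hus : u ≠ s := by
      rintro rfl
      rcases hvert v hvX with h | h | h
      exacts [hnA (hsall a) h, hnB (hsall b) h, hnZ (hsall c) h]
    have hut : u ≠ t := by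
      rintro rfl
      rcases hvert v hvX with h | h | h
      exacts [hnA (htall a) h, hnB (htall b) h, hnZ (htall c) h]
    have hvs : v ≠ s := by
      rintro rfl
      rcases hvert u huX with h | h | h
      exacts [hnA h (hsall a), hnB h (hsall b), hnZ h (hsall c)]
    have hvt : v ≠ t := by
      rintro rfl
      rcases hvert u huX with h | h | h
      exacts [hnA h (htall a), hnB h (htall b), hnZ h (htall c)]
    have hclash' : ∀ p ∈ X, ∀ q ∈ X, p.2 = q.2 →
        p = q ∨ (p = e2 ∧ q = e1) ∨ (p = e1 ∧ q = e2) := by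
      intro p hp q hq hc
      rcases hclash p hp q hq hc with h | h | h
      exacts [Or.inl h, Or.inr (Or.inr h), Or.inr (Or.inl h)]
    rcases hvert u huX with huA | huB | huZ <;> rcases hvert v hvX with hvA | hvB | hvZ
    · exact (hnA huA hvA).elim
    · exact Or.inr (case_diff_clash (hPsub a) (hPsub b) (hPsub c) hclash he1a he2b
        hA hB hZ hvAB hvAZ hvBZ ueAB ueAZ ueBZ hOddAZ hOddBZ huA hvB hus hut hvs hvt)
    · rcases case_diff_rainbow hA hZ sA sZ hvAZ ueAZ hrbAZ huA hvZ hus hut hvs hvt with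
        hrec | ⟨Q1, Q2, h1, h2, hr⟩
      · exact Or.inl (contains_rec_mono hsubAZ hrec)
      · exact Or.inr ⟨Q1, Q2, h1.trans hsubAZ, h2.trans hsubAZ, hr⟩
    · have hvBA : vertSet (P b) ∩ vertSet (P a) ⊆ {s, t} := by
        rintro x ⟨x1, x2⟩; exact hvAB ⟨x2, x1⟩
      exact Or.inr (case_diff_clash (hPsub b) (hPsub a) (hPsub c) hclash' he2b he1a
        hB hA hZ hvBA hvBZ hvAZ (ue_comm ueAB) ueBZ ueAZ hOddBZ hOddAZ huB hvA hus hut hvs hvt)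
    · exact (hnB huB hvB).elim
    · rcases case_diff_rainbow hB hZ sB sZ hvBZ ueBZ hrbBZ huB hvZ hus hut hvs hvt with
        hrec | ⟨Q1, Q2, h1, h2, hr⟩
      · exact Or.inl (contains_rec_mono hsubBZ hrec)
      · exact Or.inr ⟨Q1, Q2, h1.trans hsubBZ, h2.trans hsubBZ, hr⟩
    · have hvZA : vertSet (P c) ∩ vertSet (P a) ⊆ {s, t} := by
        rintro x ⟨x1, x2⟩; exact hvAZ ⟨x2, x1⟩
      rcases case_diff_rainbow hZ hA sZ sA hvZA (ue_comm ueAZ) hrbZA huZ hvA hus hut hvs hvt with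
        hrec | ⟨Q1, Q2, h1, h2, hr⟩
      · exact Or.inl (contains_rec_mono hsubZA hrec)
      · exact Or.inr ⟨Q1, Q2, h1.trans hsubZA, h2.trans hsubZA, hr⟩
    · have hvZB : vertSet (P c) ∩ vertSet (P b) ⊆ {s, t} := by
        rintro x ⟨x1, x2⟩; exact hvBZ ⟨x2, x1⟩
      rcases case_diff_rainbow hZ hB sZ sB hvZB (ue_comm ueBZ) hrbZB huZ hvB hus hut hvs hvt with
        hrec | ⟨Q1, Q2, h1, h2, hr⟩
      · exact Or.inl (contains_rec_mono hsubZB hrec)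
      · exact Or.inr ⟨Q1, Q2, h1.trans hsubZB, h2.trans hsubZB, hr⟩
    · exact (hnZ huZ hvZ).elim

end BadPieceMain

/-- Let `C` be a rainbow cycle and `X` either a rainbow cycle or a bad
piece, with the colors of `X` disjoint from those of `C \ X`, and with `C` having an
edge whose vertex pair is not an edge of `X`. If `C` and `X` share at least two
vertices, then `C ∪ X` contains a rainbow even cycle. -/
theorem rainbow_cycle_meets_part_gives_rainbow_even_cycle
    (C X : Finset (Sym2 V × K))
    (hC : Simple C ∧ Rainbow C ∧ IsCycleSet C)
    (hX : (Simple X ∧ Rainbow X ∧ IsCycleSet X) ∨ IsBadPiece X)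
    (hcolors : Disjoint (colorSet X) (colorSet (C \ X)))
    (hedge : ∃ p ∈ C, p.1 ∉ uedges X)
    (hmeet : ∃ v₁ v₂ : V, v₁ ≠ v₂ ∧ v₁ ∈ vertSet C ∩ vertSet X ∧
      v₂ ∈ vertSet C ∩ vertSet X) :
    ContainsRainbowEvenCycle (C ∪ X) := by
  obtain ⟨hCs, hCr, hCc⟩ := hC
  obtain ⟨u, v, Pa, huv, huX, hvX, hPsubC, hPps, hPue, hPvert⟩ :=
    arc_avoiding hCs hCc hedge hmeet
  have hPrainbow : Rainbow Pa := hCr.mono hPsubC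
  have hSP : Simple Pa := hCs.mono hPsubC
  have hXsimple : Simple X := by
    rcases hX with ⟨hXs, -, -⟩ | hbp
    · exact hXs
    · exact hbp.1
  have hPdiff : ∀ p ∈ Pa, p ∈ C \ X := by
    intro p hp
    refine Finset.mem_sdiff.2 ⟨hPsubC hp, ?_⟩
    intro hpX
    have hmem : p.1 ∈ uedges Pa ∩ uedges X := ⟨⟨p.2, hp⟩, ⟨p.2, hpX⟩⟩
    rw [hPue] at hmem
    exact hmem
  have finish : ∀ Q : Finset (Sym2 V × K), Q ⊆ X → IsPathSet Q u v → Rainbow Q →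
      Even (Pa.card + Q.card) → ContainsRainbowEvenCycle (C ∪ X) := by
    intro Q hQsub hQps hQrb hev
    have hSQ : Simple Q := hXsimple.mono hQsub
    have hue : uedges Pa ∩ uedges Q = ∅ := by
      ext e
      simp only [Set.mem_inter_iff, Set.mem_empty_iff_false, iff_false, not_and]
      intro h1 h2
      have hmem : e ∈ uedges Pa ∩ uedges X := ⟨h1, uedges_mono hQsub h2⟩
      rw [hPue] at hmem
      exact hmem
    have hvs : vertSet Pa ∩ vertSet Q ⊆ {u, v} := by
      rintro x ⟨h1, h2⟩
      exact hPvert ⟨h1, vertSet_mono hQsub h2⟩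
    have hrb : Rainbow (Pa ∪ Q) := by
      refine rainbow_union hPrainbow hQrb ?_
      intro p hp q hq hc
      exfalso
      have hqX : q.2 ∈ colorSet X := ⟨q.1, by
        have : q ∈ X := hQsub hq
        rwa [show (q.1, q.2) = q from rfl]⟩
      have hpC : p.2 ∈ colorSet (C \ X) := ⟨p.1, by
        have : p ∈ C \ X := hPdiff p hp
        rwa [show (p.1, p.2) = p from rfl]⟩
      rw [hc] at hpC
      exact Set.disjoint_right.1 hcolors hpC hqX
    exact glue_rec (hPsubC.trans Finset.subset_union_left)
      (hQsub.trans Finset.subset_union_right) huv hPps hQps hSP hSQ hue hvs hrb hev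
  rcases hX with ⟨hXs, hXr, hXcyc⟩ | hbp
  · rcases Nat.even_or_odd X.card with hev | hodd
    · exact ⟨X, Finset.subset_union_right, hXs, hXr, hXcyc, hev⟩
    · obtain ⟨Q1, Q2, h1, h2, hq1, hq2, hue12, hv12, hsum⟩ :=
        cycle_two_arcs hXcyc huX hvX huv
      have hoddsum : Odd (Q1.card + Q2.card) := by rw [hsum]; exact hodd
      have hchoice : Even (Pa.card + Q1.card) ∨ Even (Pa.card + Q2.card) := by
        rw [Nat.even_iff, Nat.even_iff]
        have := Nat.odd_iff.1 hoddsum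
        omega
      rcases hchoice with hch | hch
      · exact finish Q1 h1 hq1 (hXr.mono h1) hch
      · exact finish Q2 h2 hq2 (hXr.mono h2) hch
  · rcases badpiece_paths hbp huX hvX huv with hrec | ⟨Q1, Q2, h1, h2, hq1, hq2, hr1, hr2, hoddsum⟩
    · exact contains_rec_mono Finset.subset_union_right hrec
    · have hchoice : Even (Pa.card + Q1.card) ∨ Even (Pa.card + Q2.card) := by
        rw [Nat.even_iff, Nat.even_iff]
        have := Nat.odd_iff.1 hoddsum
        omega
      rcases hchoice with hch | hch
      · exact finish Q1 h1 hq1 hr1 hch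
      · exact finish Q2 h2 hq2 hr2 hch
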